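/- arXiv:1405.7874 — 10 statements merged into one kernel-verified Lean document; each statement's English description precedes it below -/
import Mathlib

section
/- For graphs G and H, the lexicographic product G[H] is CIS if and only if both G and H are CIS. -/
open SimpleGraph

variable {V : Type*}

/-- A set of vertices is stable (independent) if no two of its vertices are adjacent. -/
def SimpleGraph.IsStableSet (G : SimpleGraph V) (s : Set V) : Prop :=
  s.Pairwise fun u v => ¬ G.Adj u v

/-- A graph is CIS if every maximal clique and every maximal stable set intersect. -/
def SimpleGraph.IsCIS (G : SimpleGraph V) : Prop :=
  ∀ C S : Set V, Maximal G.IsClique C → Maximal G.IsStableSet S → (C ∩ S).Nonempty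

/-- The lexicographic product of two graphs. -/
def SimpleGraph.lexProd {α β : Type*} (G : SimpleGraph α) (H : SimpleGraph β) :
    SimpleGraph (α × β) where
  Adj p q := G.Adj p.1 q.1 ∨ (p.1 = q.1 ∧ H.Adj p.2 q.2)
  symm := by
    constructor
    rintro p q (h | ⟨h1, h2⟩)
    · exact Or.inl h.symm
    · exact Or.inr ⟨h1.symm, h2.symm⟩
  loopless := by
    constructor
    rintro p (h | ⟨-, h⟩)
    · exact G.irrefl h
    · exact H.irrefl h

section Aux

variable {α β : Type*} {G : SimpleGraph α} {H : SimpleGraph β}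

/-- Any pairwise property (finitary) has a maximal set, by Zorn. -/
lemma exists_maximal_pairwise (r : V → V → Prop) :
    ∃ s : Set V, Maximal (fun s : Set V => s.Pairwise r) s := by
  have key : ∀ c ⊆ {s : Set V | s.Pairwise r}, IsChain (· ⊆ ·) c →
      ∃ ub ∈ {s : Set V | s.Pairwise r}, ∀ s ∈ c, s ⊆ ub := by
    intro c hc hchain
    refine ⟨⋃₀ c, ?_, fun s hs => Set.subset_sUnion_of_mem hs⟩
    intro u hu v hv huv
    obtain ⟨s, hs, hus⟩ := hu
    obtain ⟨t, ht, hvt⟩ := hv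
    rcases hchain.total hs ht with h | h
    · exact hc ht (h hus) hvt huv
    · exact hc hs hus (h hvt) huv
  obtain ⟨m, hm⟩ := zorn_subset {s : Set V | s.Pairwise r} key
  exact ⟨m, hm⟩

lemma exists_maximal_clique (G : SimpleGraph V) : ∃ C, Maximal G.IsClique C :=
  exists_maximal_pairwise G.Adj

lemma exists_maximal_stable (G : SimpleGraph V) : ∃ S, Maximal G.IsStableSet S :=
  exists_maximal_pairwise _

lemma maximal_pairwise_nonempty {r : V → V → Prop} [Nonempty V] {s : Set V}
    (h : Maximal (fun s : Set V => s.Pairwise r) s) : s.Nonempty := by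
  rcases s.eq_empty_or_nonempty with rfl | h'
  · obtain ⟨y⟩ := ‹Nonempty V›
    have hsub := h.2 (Set.pairwise_singleton y r) (Set.empty_subset _)
    exact absurd (hsub rfl) (Set.notMem_empty y)
  · exact h'

lemma stable_symm (G : SimpleGraph V) : Symmetric fun u v => ¬ G.Adj u v :=
  fun _ _ hab h => hab h.symm

lemma fst_ne {a b : α × β} (h : a.1 ≠ b.1) : a ≠ b := fun e => h (congrArg Prod.fst e)

lemma snd_ne {a b : α × β} (h : a.2 ≠ b.2) : a ≠ b := fun e => h (congrArg Prod.snd e)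

lemma snd_ne_of_ne {a b : α × β} (h1 : a.1 = b.1) (hne : a ≠ b) : a.2 ≠ b.2 :=
  fun h2 => hne (Prod.ext h1 h2)

lemma fst_ne_of_ne {a b : α × β} (h2 : a.2 = b.2) (hne : a ≠ b) : a.1 ≠ b.1 :=
  fun h1 => hne (Prod.ext h1 h2)

/-- Product of maximal cliques is a maximal clique of the lex product. -/
lemma prod_maximal_clique {C : Set α} {D : Set β}
    (hC : Maximal G.IsClique C) (hD : Maximal H.IsClique D) :
    Maximal (G.lexProd H).IsClique (C ×ˢ D) := by
  constructor
  · rintro ⟨u, x⟩ ⟨hu, hx⟩ ⟨v, y⟩ ⟨hv, hy⟩ hne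
    by_cases huv : u = v
    · subst huv
      exact Or.inr ⟨rfl, hD.1 hx hy (snd_ne_of_ne rfl hne)⟩
    · exact Or.inl (hC.1 hu hv huv)
  · rintro K hK hsub ⟨u, x⟩ hux
    haveI : Nonempty β := ⟨x⟩
    obtain ⟨y₀, hy₀⟩ := maximal_pairwise_nonempty hD
    have huC : u ∈ C := by
      have hcl : G.IsClique (insert u C) := by
        refine (@Set.pairwise_insert_of_symm _ _ _ _ G.symm).2 ⟨hC.1, fun v hv hvu => ?_⟩
        rcases hK hux (hsub ⟨hv, hy₀⟩) (show (u, x) ≠ (v, y₀) from fst_ne hvu) with h | ⟨h, _⟩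
        · exact h
        · exact absurd h hvu
      exact hC.2 hcl (Set.subset_insert _ _) (Set.mem_insert _ _)
    have hxD : x ∈ D := by
      have hcl : H.IsClique (insert x D) := by
        refine (@Set.pairwise_insert_of_symm _ _ _ _ H.symm).2 ⟨hD.1, fun y hy hyx => ?_⟩
        rcases hK hux (hsub ⟨huC, hy⟩) (show (u, x) ≠ (u, y) from snd_ne hyx) with h | ⟨_, h⟩
        · exact absurd h (G.irrefl)
        · exact h
      exact hD.2 hcl (Set.subset_insert _ _) (Set.mem_insert _ _)
    exact ⟨huC, hxD⟩

/-- Product of maximal stable sets is a maximal stable set of the lex product. -/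
lemma prod_maximal_stable {T : Set α} {R : Set β}
    (hT : Maximal G.IsStableSet T) (hR : Maximal H.IsStableSet R) :
    Maximal (G.lexProd H).IsStableSet (T ×ˢ R) := by
  constructor
  · rintro ⟨u, x⟩ ⟨hu, hx⟩ ⟨v, y⟩ ⟨hv, hy⟩ hne hadj
    rcases hadj with h | ⟨h, h'⟩
    · exact hT.1 hu hv (G.ne_of_adj h) h
    · exact hR.1 hx hy (snd_ne_of_ne h hne) h'
  · rintro S hS hsub ⟨u, x⟩ hux
    haveI : Nonempty β := ⟨x⟩
    obtain ⟨y₀, hy₀⟩ := maximal_pairwise_nonempty hR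
    have huT : u ∈ T := by
      have hst : G.IsStableSet (insert u T) := by
        refine (@Set.pairwise_insert_of_symm _ _ _ _ ⟨fun _ _ h => stable_symm G h⟩).2
          ⟨hT.1, fun v hv hvu hadj => ?_⟩
        exact hS hux (hsub ⟨hv, hy₀⟩) (show (u, x) ≠ (v, y₀) from fst_ne hvu) (Or.inl hadj)
      exact hT.2 hst (Set.subset_insert _ _) (Set.mem_insert _ _)
    have hxR : x ∈ R := by
      have hst : H.IsStableSet (insert x R) := by
        refine (@Set.pairwise_insert_of_symm _ _ _ _ ⟨fun _ _ h => stable_symm H h⟩).2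
          ⟨hR.1, fun y hy hyx hadj => ?_⟩
        exact hS hux (hsub ⟨huT, hy⟩) (show (u, x) ≠ (u, y) from snd_ne hyx) (Or.inr ⟨rfl, hadj⟩)
      exact hR.2 hst (Set.subset_insert _ _) (Set.mem_insert _ _)
    exact ⟨huT, hxR⟩

/-- The projection of a maximal clique of the lex product is a maximal clique. -/
lemma proj_maximal_clique [Nonempty β] {K : Set (α × β)}
    (hK : Maximal (G.lexProd H).IsClique K) :
    Maximal G.IsClique (Prod.fst '' K) := by
  constructor
  · rintro u ⟨⟨u', x⟩, hmem, rfl⟩ v ⟨⟨v', y⟩, hmem', rfl⟩ hne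
    rcases hK.1 hmem hmem' (fst_ne hne) with h | ⟨h, _⟩
    · exact h
    · exact absurd h hne
  · intro C' hC' hsub u hu
    by_contra hu'
    obtain ⟨x₀⟩ := ‹Nonempty β›
    have hcl : (G.lexProd H).IsClique (insert (u, x₀) K) := by
      refine (@Set.pairwise_insert_of_symm _ _ _ _ (G.lexProd H).symm).2 ⟨hK.1, ?_⟩
      rintro ⟨v, y⟩ hvy hne
      have hvu : u ≠ v := fun h => hu' ⟨(v, y), hvy, h.symm⟩
      exact Or.inl (hC' hu (hsub ⟨(v, y), hvy, rfl⟩) hvu)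
    exact hu' ⟨(u, x₀), hK.2 hcl (Set.subset_insert _ _) (Set.mem_insert _ _), rfl⟩

/-- Fibers of a maximal clique of the lex product are maximal cliques. -/
lemma fiber_maximal_clique {K : Set (α × β)}
    (hK : Maximal (G.lexProd H).IsClique K) {u : α} (hu : u ∈ Prod.fst '' K) :
    Maximal H.IsClique {x | (u, x) ∈ K} := by
  constructor
  · intro x hx y hy hxy
    rcases hK.1 hx hy (snd_ne hxy) with h | ⟨_, h⟩
    · exact absurd h (G.irrefl)
    · exact h
  · intro D' hD' hsub x hx
    obtain ⟨x₁, hx₁⟩ : ∃ x₁, (u, x₁) ∈ K := by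
      obtain ⟨⟨u₁, y₁⟩, hmem, h1⟩ := hu
      dsimp only at h1
      exact ⟨y₁, h1 ▸ hmem⟩
    have hcl : (G.lexProd H).IsClique (insert (u, x) K) := by
      refine (@Set.pairwise_insert_of_symm _ _ _ _ (G.lexProd H).symm).2 ⟨hK.1, ?_⟩
      rintro ⟨v, y⟩ hvy hne
      by_cases hvu : u = v
      · subst hvu
        exact Or.inr ⟨rfl, hD' hx (show y ∈ D' from hsub hvy)
          (show x ≠ y from snd_ne_of_ne (a := (u, x)) (b := (u, y)) rfl hne)⟩
      · rcases hK.1 hx₁ hvy (show (u, x₁) ≠ (v, y) from fst_ne hvu) with h | ⟨h, _⟩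
        · exact Or.inl h
        · exact absurd h hvu
    exact hK.2 hcl (Set.subset_insert _ _) (Set.mem_insert _ _)

/-- The projection of a maximal stable set of the lex product is a maximal stable set. -/
lemma proj_maximal_stable [Nonempty β] {S : Set (α × β)}
    (hS : Maximal (G.lexProd H).IsStableSet S) :
    Maximal G.IsStableSet (Prod.fst '' S) := by
  constructor
  · rintro u ⟨⟨u', x⟩, hmem, rfl⟩ v ⟨⟨v', y⟩, hmem', rfl⟩ hne hadj
    exact hS.1 hmem hmem' (fst_ne hne) (Or.inl hadj)
  · intro T' hT' hsub u hu
    by_contra hu'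
    obtain ⟨x₀⟩ := ‹Nonempty β›
    have hst : (G.lexProd H).IsStableSet (insert (u, x₀) S) := by
      refine (@Set.pairwise_insert_of_symm _ _ _ _ ⟨fun _ _ h => stable_symm _ h⟩).2 ⟨hS.1, ?_⟩
      rintro ⟨v, y⟩ hvy hne hadj
      have hvu : u ≠ v := fun h => hu' ⟨(v, y), hvy, h.symm⟩
      rcases hadj with h | ⟨h, _⟩
      · exact hT' hu (hsub ⟨(v, y), hvy, rfl⟩) hvu h
      · exact hvu h
    exact hu' ⟨(u, x₀), hS.2 hst (Set.subset_insert _ _) (Set.mem_insert _ _), rfl⟩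

/-- Fibers of a maximal stable set of the lex product are maximal stable sets. -/
lemma fiber_maximal_stable {S : Set (α × β)}
    (hS : Maximal (G.lexProd H).IsStableSet S) {u : α} (hu : u ∈ Prod.fst '' S) :
    Maximal H.IsStableSet {x | (u, x) ∈ S} := by
  constructor
  · intro x hx y hy hxy hadj
    exact hS.1 hx hy (snd_ne hxy) (Or.inr ⟨rfl, hadj⟩)
  · intro R' hR' hsub x hx
    obtain ⟨x₁, hx₁⟩ : ∃ x₁, (u, x₁) ∈ S := by
      obtain ⟨⟨u₁, y₁⟩, hmem, h1⟩ := hu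
      dsimp only at h1
      exact ⟨y₁, h1 ▸ hmem⟩
    have hst : (G.lexProd H).IsStableSet (insert (u, x) S) := by
      refine (@Set.pairwise_insert_of_symm _ _ _ _ ⟨fun _ _ h => stable_symm _ h⟩).2 ⟨hS.1, ?_⟩
      rintro ⟨v, y⟩ hvy hne hadj
      rcases hadj with h | ⟨h, h'⟩
      · have hvu : u ≠ v := G.ne_of_adj h
        exact hS.1 hx₁ hvy (show (u, x₁) ≠ (v, y) from fst_ne hvu) (Or.inl h)
      · dsimp only at h
        subst h
        exact hR' hx (show y ∈ R' from hsub hvy)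
          (show x ≠ y from snd_ne_of_ne (a := (u, x)) (b := (u, y)) rfl hne) h'
    exact hS.2 hst (Set.subset_insert _ _) (Set.mem_insert _ _)

end Aux

theorem lexProd_cis_iff {α β : Type*} (G : SimpleGraph α) (H : SimpleGraph β) :
    (G.lexProd H).IsCIS ↔ G.IsCIS ∧ H.IsCIS := by
  constructor
  · intro h
    obtain ⟨D, hD⟩ := exists_maximal_clique H
    obtain ⟨R, hR⟩ := exists_maximal_stable H
    obtain ⟨C, hC⟩ := exists_maximal_clique G
    obtain ⟨T, hT⟩ := exists_maximal_stable G
    constructor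
    · intro C' T' hC' hT'
      obtain ⟨⟨u, x⟩, ⟨⟨huC, -⟩, ⟨huT, -⟩⟩⟩ :=
        h _ _ (prod_maximal_clique hC' hD) (prod_maximal_stable hT' hR)
      exact ⟨u, huC, huT⟩
    · intro D' R' hD' hR'
      obtain ⟨⟨u, x⟩, ⟨⟨-, hxD⟩, ⟨-, hxR⟩⟩⟩ :=
        h _ _ (prod_maximal_clique hC hD') (prod_maximal_stable hT hR')
      exact ⟨x, hxD, hxR⟩
  · rintro ⟨hG, hH⟩ K S hK hS
    obtain ⟨D, hD⟩ := exists_maximal_clique H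
    obtain ⟨R, hR⟩ := exists_maximal_stable H
    obtain ⟨x₀, -⟩ := hH D R hD hR
    haveI : Nonempty β := ⟨x₀⟩
    obtain ⟨u, huK, huS⟩ := hG _ _ (proj_maximal_clique hK) (proj_maximal_stable hS)
    obtain ⟨x, hxK, hxS⟩ := hH _ _ (fiber_maximal_clique hK huK) (fiber_maximal_stable hS huS)
    exact ⟨(u, x), hxK, hxS⟩
end

section
/- A graph is CIS if and only if its irreducible quotient (the quotient by the equivalence relation 'having the same open neighborhood') is CIS. -/
open SimpleGraph

variable {V : Type*}

/-- The equivalence relation "having the same open neighborhood". -/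
def SimpleGraph.nbhdSetoid (G : SimpleGraph V) : Setoid V :=
  ⟨fun u v => G.neighborSet u = G.neighborSet v,
    ⟨fun _ => rfl, Eq.symm, Eq.trans⟩⟩

/-- The irreducible quotient of a graph: the quotient by the relation
"having the same open neighborhood". -/
def SimpleGraph.irreducibleQuotient (G : SimpleGraph V) :
    SimpleGraph (Quotient G.nbhdSetoid) where
  Adj x y := ∃ u v : V, Quotient.mk G.nbhdSetoid u = x ∧
      Quotient.mk G.nbhdSetoid v = y ∧ G.Adj u v
  symm := by
    constructor
    rintro x y ⟨u, v, hu, hv, huv⟩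
    exact ⟨v, u, hv, hu, huv.symm⟩
  loopless := by
    constructor
    rintro x ⟨u, v, hu, hv, huv⟩
    have h : G.neighborSet u = G.neighborSet v := Quotient.exact (hu.trans hv.symm)
    have : v ∈ G.neighborSet v := h ▸ huv
    exact G.loopless.irrefl v this

private lemma adj_of_eqv {G : SimpleGraph V} {u u' v v' : V}
    (hu : G.neighborSet u = G.neighborSet u')
    (hv : G.neighborSet v = G.neighborSet v') (h : G.Adj u v) : G.Adj u' v' := by
  have h0 : v ∈ G.neighborSet u := h
  have h1 : v ∈ G.neighborSet u' := hu ▸ h0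
  have h1' : G.Adj u' v := h1
  have h2 : u' ∈ G.neighborSet v := h1'.symm
  have h3 : u' ∈ G.neighborSet v' := hv ▸ h2
  have h3' : G.Adj v' u' := h3
  exact h3'.symm

private lemma not_adj_of_eqv {G : SimpleGraph V} {u v : V}
    (h : G.neighborSet u = G.neighborSet v) : ¬ G.Adj u v := by
  intro hadj
  have h0 : v ∈ G.neighborSet u := hadj
  have : v ∈ G.neighborSet v := h ▸ h0
  exact G.loopless.irrefl v this

private lemma quot_adj_iff {G : SimpleGraph V} {u v : V} :
    G.irreducibleQuotient.Adj (Quotient.mk G.nbhdSetoid u) (Quotient.mk G.nbhdSetoid v) ↔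
      G.Adj u v := by
  constructor
  · rintro ⟨a, b, ha, hb, hab⟩
    exact adj_of_eqv (Quotient.exact ha) (Quotient.exact hb) hab
  · intro h
    exact ⟨u, v, rfl, rfl, h⟩

private lemma not_adj_symm {G : SimpleGraph V} :
    Symmetric fun u v => ¬ G.Adj u v := fun _ _ h had => h had.symm

private lemma qnot_adj_symm {G : SimpleGraph V} :
    Symmetric fun u v => ¬ G.irreducibleQuotient.Adj u v := fun _ _ h had => h had.symm

theorem cis_iff_irreducibleQuotient_cis (G : SimpleGraph V) :
    G.IsCIS ↔ G.irreducibleQuotient.IsCIS := by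
  set Q := G.irreducibleQuotient with hQdef
  set π : V → Quotient G.nbhdSetoid := Quotient.mk G.nbhdSetoid with hπ
  have hout : ∀ x : Quotient G.nbhdSetoid, π x.out = x := fun x => Quotient.out_eq x
  have heqv : ∀ {a b : V}, π a = π b → G.neighborSet a = G.neighborSet b :=
    fun h => Quotient.exact h
  constructor
  · -- G CIS → Q CIS
    intro hG C' S' hC' hS'
    -- the preimage of S' is a maximal stable set
    set S : Set V := {v | π v ∈ S'} with hSdef
    have hSstable : G.IsStableSet S := by
      intro u hu v hv hne hadj
      by_cases hq : π u = π v
      · exact not_adj_of_eqv (heqv hq) hadj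
      · exact hS'.1 hu hv hq (quot_adj_iff.mpr hadj)
    have hSmax : Maximal G.IsStableSet S := by
      refine ⟨hSstable, fun T hT hST w hw => ?_⟩
      show π w ∈ S'
      have hins : Q.IsStableSet (insert (π w) S') := by
        haveI : Std.Symm (fun u v => ¬ Q.Adj u v) := ⟨fun _ _ h => qnot_adj_symm h⟩
        rw [SimpleGraph.IsStableSet, Set.pairwise_insert_of_symm]
        refine ⟨hS'.1, fun b hb hne hadj => ?_⟩
        obtain ⟨u, rfl⟩ := Quotient.exists_rep b
        have hu : u ∈ S := hb
        have : G.Adj w u := quot_adj_iff.mp hadj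
        have hwu : w ≠ u := fun h => hne (by rw [h])
        exact hT hw (hST hu) hwu this
      exact hS'.2 hins (Set.subset_insert _ _) (Set.mem_insert _ _)
    -- the set of chosen representatives of C' is a maximal clique
    set C : Set V := Quotient.out '' C' with hCdef
    have hCclique : G.IsClique C := by
      rintro x ⟨a, ha, rfl⟩ y ⟨b, hb, rfl⟩ hne
      have hab : a ≠ b := fun h => hne (by rw [h])
      have := hC'.1 ha hb hab
      rw [← hout a, ← hout b] at this
      exact quot_adj_iff.mp this
    have hCmax : Maximal G.IsClique C := by
      refine ⟨hCclique, fun T hT hCT w hw => ?_⟩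
      have hπw : π w ∈ C' := by
        have hins : Q.IsClique (insert (π w) C') := by
          haveI := Q.symm
          rw [SimpleGraph.IsClique, Set.pairwise_insert_of_symm]
          refine ⟨hC'.1, fun b hb hne => ?_⟩
          have hbT : b.out ∈ T := hCT ⟨b, hb, rfl⟩
          have hwb : w ≠ b.out := fun h => hne (by rw [h, hout])
          have := hT hw hbT hwb
          rw [← hout b]
          exact quot_adj_iff.mpr this
        exact hC'.2 hins (Set.subset_insert _ _) (Set.mem_insert _ _)
      have hwout : w = (π w).out := by
        by_contra hne
        have h1 : (π w).out ∈ T := hCT ⟨π w, hπw, rfl⟩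
        have hadj := hT hw h1 hne
        have : G.neighborSet w = G.neighborSet (π w).out := heqv (by rw [hout])
        exact not_adj_of_eqv this hadj
      exact ⟨π w, hπw, hwout.symm⟩
    obtain ⟨v, hvC, hvS⟩ := hG C S hCmax hSmax
    obtain ⟨a, ha, rfl⟩ := hvC
    have haS : π a.out ∈ S' := hvS
    rw [hout] at haS
    exact ⟨a, ha, haS⟩
  · -- Q CIS → G CIS
    intro hQ C S hC hS
    -- image of C is a maximal clique in Q
    have hπCclique : Q.IsClique (π '' C) := by
      rintro x ⟨u, hu, rfl⟩ y ⟨v, hv, rfl⟩ hne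
      have huv : u ≠ v := fun h => hne (by rw [h])
      exact quot_adj_iff.mpr (hC.1 hu hv huv)
    have hπCmax : Maximal Q.IsClique (π '' C) := by
      refine ⟨hπCclique, fun T hT hCT x hx => ?_⟩
      by_cases hxC : x ∈ π '' C
      · exact hxC
      · exfalso
        set w := x.out with hw
        have hins : G.IsClique (insert w C) := by
          haveI := G.symm
          rw [SimpleGraph.IsClique, Set.pairwise_insert_of_symm]
          refine ⟨hC.1, fun u hu hne => ?_⟩
          have h1 : π u ∈ T := hCT ⟨u, hu, rfl⟩
          have h2 : π u ≠ x := fun h => hxC (h ▸ ⟨u, hu, rfl⟩)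
          have := hT h1 hx h2
          rw [← hout x] at this
          exact (quot_adj_iff.mp this).symm
        have : w ∈ C := hC.2 hins (Set.subset_insert _ _) (Set.mem_insert _ _)
        exact hxC ⟨w, this, hout x⟩
    -- image of S is a maximal stable set in Q
    have hπSstable : Q.IsStableSet (π '' S) := by
      rintro x ⟨u, hu, rfl⟩ y ⟨v, hv, rfl⟩ hne hadj
      have huv : u ≠ v := fun h => hne (by rw [h])
      exact hS.1 hu hv huv (quot_adj_iff.mp hadj)
    have hπSmax : Maximal Q.IsStableSet (π '' S) := by
      refine ⟨hπSstable, fun T hT hST x hx => ?_⟩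
      by_cases hxS : x ∈ π '' S
      · exact hxS
      · exfalso
        set w := x.out with hw
        have hins : G.IsStableSet (insert w S) := by
          haveI : Std.Symm (fun u v => ¬ G.Adj u v) := ⟨fun _ _ h => not_adj_symm h⟩
          rw [SimpleGraph.IsStableSet, Set.pairwise_insert_of_symm]
          refine ⟨hS.1, fun u hu hne hadj => ?_⟩
          have h1 : π u ∈ T := hST ⟨u, hu, rfl⟩
          by_cases h2 : π u = x
          · have : G.neighborSet w = G.neighborSet u := heqv (by rw [hout, h2])
            exact not_adj_of_eqv this hadj
          · have : Q.Adj (π w) (π u) := quot_adj_iff.mpr hadj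
            rw [hout x] at this
            exact hT h1 hx h2 this.symm
        have : w ∈ S := hS.2 hins (Set.subset_insert _ _) (Set.mem_insert _ _)
        exact hxS ⟨w, this, hout x⟩
    obtain ⟨x, hxC, hxS⟩ := hQ (π '' C) (π '' S) hπCmax hπSmax
    obtain ⟨u, huC, rfl⟩ := hxC
    obtain ⟨v, hvS, hvu⟩ := hxS
    -- u and v have the same neighborhood; show u ∈ S
    have hnbr : G.neighborSet v = G.neighborSet u := heqv hvu
    have huS : u ∈ S := by
      have hins : G.IsStableSet (insert u S) := by
        haveI : Std.Symm (fun u v => ¬ G.Adj u v) := ⟨fun _ _ h => not_adj_symm h⟩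
        rw [SimpleGraph.IsStableSet, Set.pairwise_insert_of_symm]
        refine ⟨hS.1, fun w hw hne hadj => ?_⟩
        by_cases hwv : w = v
        · subst hwv
          exact not_adj_of_eqv hnbr hadj.symm
        · have : G.Adj v w := adj_of_eqv hnbr.symm rfl hadj
          exact hS.1 hvS hw (Ne.symm hwv) this
      exact hS.2 hins (Set.subset_insert _ _) (Set.mem_insert _ _)
    exact ⟨u, huC, huS⟩
end

section
/- A connected graph with clique number 2 is CIS if and only if it is a complete bipartite graph K_{n,m} for some n, m ≥ 1. -/
open SimpleGraph

variable {V : Type*}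

section helpers

variable {W : Type*} {G : SimpleGraph V} {H : SimpleGraph W}

lemma stable_extend [Finite V] {s : Set V} (hs : G.IsStableSet s) :
    ∃ t, s ⊆ t ∧ Maximal G.IsStableSet t :=
  Finite.exists_le_maximal hs

lemma p4_free [Finite V] (hCIS : G.IsCIS)
    (htf : ∀ a b c, G.Adj a b → G.Adj a c → G.Adj b c → False)
    {a b c d : V} (hab : G.Adj a b) (hbc : G.Adj b c) (hcd : G.Adj c d)
    (hac : ¬ G.Adj a c) (had : ¬ G.Adj a d) (hbd : ¬ G.Adj b d) : False := by
  have hCmax : Maximal G.IsClique {b, c} := by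
    constructor
    · exact isClique_pair.2 (fun _ => hbc)
    · intro t ht hsub x hx
      rcases eq_or_ne x b with rfl | hxb
      · exact Set.mem_insert _ _
      rcases eq_or_ne x c with rfl | hxc
      · exact Set.mem_insert_of_mem _ rfl
      exact absurd hbc (fun _ => htf x b c (ht hx (hsub (Set.mem_insert _ _)) hxb)
        (ht hx (hsub (Set.mem_insert_of_mem _ rfl)) hxc) hbc)
  have hadne : a ≠ d := by rintro rfl; exact hbd hab.symm
  have hSstab : G.IsStableSet {a, d} :=
    Set.pairwise_pair.2 (fun _ => ⟨had, fun h => had h.symm⟩)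
  obtain ⟨S, hsubS, hSmax⟩ := stable_extend hSstab
  obtain ⟨x, hxC, hxS⟩ := hCIS _ _ hCmax hSmax
  simp only [Set.mem_insert_iff, Set.mem_singleton_iff] at hxC
  rcases hxC with rfl | rfl
  · exact hSmax.1 (hsubS (Set.mem_insert _ _)) hxS (G.ne_of_adj hab) hab
  · exact hSmax.1 hxS (hsubS (Set.mem_insert_of_mem _ rfl))
      (G.ne_of_adj hcd) hcd

lemma cross_edge {s : Set V} {a b : V} (w : G.Walk a b) (ha : a ∈ s) (hb : b ∉ s) :
    ∃ x y, G.Adj x y ∧ x ∈ s ∧ y ∉ s := by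
  induction w with
  | nil => exact absurd ha hb
  | @cons u v z h p ih =>
    by_cases hv : v ∈ s
    · exact ih hv hb
    · exact ⟨u, v, h, ha, hv⟩

lemma iso_image_clique (e : G ≃g H) (s : Set V) : H.IsClique (e '' s) ↔ G.IsClique s := by
  constructor
  · intro h x hx y hy hxy
    have := h (Set.mem_image_of_mem e hx) (Set.mem_image_of_mem e hy)
      (fun hexy => hxy (e.injective hexy))
    exact e.map_rel_iff.1 this
  · intro h x hx y hy hxy
    obtain ⟨x', hx', rfl⟩ := hx
    obtain ⟨y', hy', rfl⟩ := hy
    exact e.map_rel_iff.2 (h hx' hy' (fun hh => hxy (by rw [hh])))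

lemma iso_image_stable (e : G ≃g H) (s : Set V) : H.IsStableSet (e '' s) ↔ G.IsStableSet s := by
  constructor
  · intro h x hx y hy hxy hadj
    exact h (Set.mem_image_of_mem e hx) (Set.mem_image_of_mem e hy)
      (fun hexy => hxy (e.injective hexy)) (e.map_rel_iff.2 hadj)
  · intro h x hx y hy hxy hadj
    obtain ⟨x', hx', rfl⟩ := hx
    obtain ⟨y', hy', rfl⟩ := hy
    exact h hx' hy' (fun hh => hxy (by rw [hh])) (e.map_rel_iff.1 hadj)

lemma image_maximal (e : V ≃ W) {P : Set V → Prop} {Q : Set W → Prop}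
    (hPQ : ∀ s, Q (e '' s) ↔ P s) {s : Set V} (h : Maximal P s) : Maximal Q (e '' s) := by
  refine ⟨(hPQ s).2 h.1, fun t ht hsub => ?_⟩
  have ht' : P (e ⁻¹' t) := by
    rw [← hPQ]
    rwa [Set.image_preimage_eq _ e.surjective]
  have hts : e ⁻¹' t ⊆ s := h.2 ht' (Set.image_subset_iff.1 hsub)
  intro z hz
  obtain ⟨z', rfl⟩ := e.surjective z
  exact Set.mem_image_of_mem e (hts hz)

end helpers

theorem connected_cliqueNum_two_cis_iff (G : SimpleGraph V) [Fintype V]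
    (hconn : G.Connected) (hω : G.cliqueNum = 2) :
    G.IsCIS ↔ ∃ n m : ℕ, 1 ≤ n ∧ 1 ≤ m ∧
      Nonempty (G ≃g completeBipartiteGraph (Fin n) (Fin m)) := by
  classical
  -- triangle-free
  have htf : ∀ a b c, G.Adj a b → G.Adj a c → G.Adj b c → False := by
    intro a b c hab hac hbc
    have h3 : G.IsNClique 3 {a, b, c} := is3Clique_triple_iff.2 ⟨hab, hac, hbc⟩
    have := h3.1.card_le_cliqueNum (t := {a, b, c})
    rw [hω, h3.2] at this
    omega
  -- an edge exists
  obtain ⟨s, hs⟩ := G.exists_isNClique_cliqueNum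
  rw [hω] at hs
  obtain ⟨u, v, huvne, hsuv⟩ := Finset.card_eq_two.1 hs.2
  have huv : G.Adj u v := hs.1 (by simp [hsuv]) (by simp [hsuv]) huvne
  constructor
  · -- CIS → complete bipartite
    intro hCIS
    set A : Set V := G.neighborSet v with hA
    set B : Set V := G.neighborSet u with hB
    have huA : u ∈ A := huv.symm
    have hvB : v ∈ B := huv
    have hdisj : ∀ x, x ∈ A → x ∈ B → False := fun x hx hy => htf u v x huv hy hx
    have hunion : ∀ x, x ∈ A ∪ B := by
      intro w
      by_contra hw
      obtain ⟨p, q, hpq, hp, hq⟩ := cross_edge (hconn u w).some (Or.inl huA) hw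
      simp only [Set.mem_union] at hq
      push_neg at hq
      obtain ⟨hqA, hqB⟩ := hq
      rcases hp with hpA | hpB
      · exact p4_free hCIS htf huv hpA hpq
          (fun h => htf u v p huv h hpA) hqB hqA
      · exact p4_free hCIS htf huv.symm hpB hpq
          (fun h => htf u v p huv hpB h) hqA hqB
    have hcomp : ∀ x ∈ A, ∀ y ∈ B, G.Adj x y := by
      intro x hx y hy
      by_cases hxu : x = u
      · subst hxu; exact hy
      by_cases hyv : y = v
      · subst hyv; exact hx.symm
      by_contra hxy
      have hxu' : ¬ G.Adj x u := fun h => htf x u v h hx.symm huv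
      have hyv' : ¬ G.Adj v y := fun h => htf u v y huv hy h
      exact p4_free hCIS htf hx.symm huv.symm hy hxu' hxy hyv'
    have hcompl : Aᶜ = B := by
      ext x
      simp only [Set.mem_compl_iff]
      constructor
      · intro hx
        rcases hunion x with h | h
        · exact absurd h hx
        · exact h
      · intro hx hxA; exact hdisj x hxA hx
    have hadj : ∀ x y, G.Adj x y ↔ ((x ∈ A ∧ y ∈ B) ∨ (x ∈ B ∧ y ∈ A)) := by
      intro x y
      constructor
      · intro h
        rcases hunion x with hx | hx
        · left
          refine ⟨hx, ?_⟩
          rcases hunion y with hy | hy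
          · exact absurd h (fun hh => htf v x y hx hy h)
          · exact hy
        · right
          refine ⟨hx, ?_⟩
          rcases hunion y with hy | hy
          · exact hy
          · exact absurd h (fun hh => htf u x y hx hy h)
      · rintro (⟨hx, hy⟩ | ⟨hx, hy⟩)
        · exact hcomp x hx y hy
        · exact (hcomp y hy x hx).symm
    obtain ⟨n, ⟨e1⟩⟩ := Finite.exists_equiv_fin ↥A
    obtain ⟨m, ⟨e2⟩⟩ := Finite.exists_equiv_fin ↥(Aᶜ)
    have hn : 1 ≤ n := by
      have : Nonempty (Fin n) := ⟨e1 ⟨u, huA⟩⟩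
      exact Fin.pos_iff_nonempty.2 this
    have hm : 1 ≤ m := by
      have hvc : v ∈ Aᶜ := by rw [hcompl]; exact hvB
      have : Nonempty (Fin m) := ⟨e2 ⟨v, hvc⟩⟩
      exact Fin.pos_iff_nonempty.2 this
    refine ⟨n, m, hn, hm, ⟨?_⟩⟩
    refine ⟨(Equiv.Set.sumCompl A).symm.trans (Equiv.sumCongr e1 e2), ?_⟩
    intro x y
    by_cases hx : x ∈ A <;> by_cases hy : y ∈ A
    · have hnadj : ¬ G.Adj x y := fun h =>
        ((hadj x y).1 h).elim (fun hc => hdisj y hy hc.2) (fun hc => hdisj x hx hc.1)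
      simp [Equiv.Set.sumCompl_symm_apply_of_mem hx,
        Equiv.Set.sumCompl_symm_apply_of_mem hy, hnadj]
    · have hadj' : G.Adj x y := hcomp x hx y (by rw [← hcompl]; exact hy)
      simp [Equiv.Set.sumCompl_symm_apply_of_mem hx,
        Equiv.Set.sumCompl_symm_apply_of_notMem hy, hadj']
    · have hadj' : G.Adj x y := (hcomp y hy x (by rw [← hcompl]; exact hx)).symm
      simp [Equiv.Set.sumCompl_symm_apply_of_notMem hx,
        Equiv.Set.sumCompl_symm_apply_of_mem hy, hadj']
    · have hnadj : ¬ G.Adj x y := fun h =>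
        ((hadj x y).1 h).elim (fun hc => hx hc.1) (fun hc => hy hc.2)
      simp [Equiv.Set.sumCompl_symm_apply_of_notMem hx,
        Equiv.Set.sumCompl_symm_apply_of_notMem hy, hnadj]
  · -- complete bipartite → CIS
    rintro ⟨n, m, hn, hm, ⟨e⟩⟩ C S hC hS
    set K := completeBipartiteGraph (Fin n) (Fin m) with hK
    have hC' : Maximal K.IsClique (e '' C) :=
      image_maximal e.toEquiv (fun s => iso_image_clique e s) hC
    have hS' : Maximal K.IsStableSet (e '' S) :=
      image_maximal e.toEquiv (fun s => iso_image_stable e s) hS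
    have a0 : Fin n := ⟨0, hn⟩
    have b0 : Fin m := ⟨0, hm⟩
    have hadjlr : ∀ (a : Fin n) (b : Fin m), K.Adj (Sum.inl a) (Sum.inr b) := by
      intro a b; simp [hK]
    have hClr : (∃ a, Sum.inl a ∈ e '' C) ∧ (∃ b, Sum.inr b ∈ e '' C) := by
      by_cases h1 : ∃ b, Sum.inr b ∈ e '' C
      · obtain ⟨b, hb⟩ := h1
        refine ⟨?_, ⟨b, hb⟩⟩
        by_contra h2
        push_neg at h2
        have hsub : e '' C ⊆ {Sum.inr b} := by
          intro z hz
          cases z with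
          | inl a => exact absurd hz (h2 a)
          | inr b' =>
            have hbb : b' = b := by
              by_contra hne
              have := hC'.1 hz hb (by simp [hne])
              simp [hK] at this
            simp [hbb]
        have : Sum.inl a0 ∈ e '' C := by
          refine hC'.2 (y := {Sum.inr b, Sum.inl a0}) ?_ ?_ (Set.mem_insert_of_mem _ rfl)
          · exact isClique_pair.2 (fun _ => (hadjlr a0 b).symm)
          · intro z hz; exact Set.mem_insert_iff.2 (Or.inl (hsub hz))
        exact (h2 a0) this
      · push_neg at h1
        exfalso
        have hCne : (e '' C).Nonempty := by
          by_contra hne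
          rw [Set.not_nonempty_iff_eq_empty] at hne
          have : Sum.inl a0 ∈ e '' C := by
            refine hC'.2 (y := {Sum.inl a0}) ?_ ?_ rfl
            · intro x hx y hy hxy; simp_all
            · rw [hne]; exact Set.empty_subset _
          rw [hne] at this; exact this
        obtain ⟨z, hz⟩ := hCne
        obtain ⟨a, rfl⟩ : ∃ a, z = Sum.inl a := by
          cases z with
          | inl a => exact ⟨a, rfl⟩
          | inr b => exact absurd hz (h1 b)
        have : Sum.inr b0 ∈ e '' C := by
          refine hC'.2 (y := {Sum.inl a, Sum.inr b0}) ?_ ?_ ?_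
          · exact isClique_pair.2 (fun _ => hadjlr a b0)
          · intro w hw
            cases w with
            | inl a' =>
              rcases eq_or_ne a' a with rfl | hne
              · exact Set.mem_insert _ _
              · have := hC'.1 hw hz (by simp [hne])
                simp [hK] at this
            | inr b => exact absurd hw (h1 b)
          · exact Set.mem_insert_of_mem _ rfl
        exact h1 b0 this
    obtain ⟨⟨a, ha⟩, ⟨b, hb⟩⟩ := hClr
    have hmeet : ((e '' C) ∩ (e '' S)).Nonempty := by
      by_cases hL : ∃ a', Sum.inl a' ∈ e '' S
      · obtain ⟨a', ha'⟩ := hL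
        have hnr : ∀ b', Sum.inr b' ∉ e '' S := by
          intro b' hb'
          exact hS'.1 ha' hb' (by simp) (hadjlr a' b')
        have hleft : ∀ a'', Sum.inl a'' ∈ e '' S := by
          intro a''
          refine hS'.2 (y := Set.range Sum.inl) ?_ ?_ (Set.mem_range_self a'')
          · rintro x ⟨p, rfl⟩ y ⟨q, rfl⟩ hxy hadj
            simp [hK] at hadj
          · intro z hz
            cases z with
            | inl p => exact ⟨p, rfl⟩
            | inr q => exact absurd hz (hnr q)
        exact ⟨Sum.inl a, ha, hleft a⟩
      · push_neg at hL
        have hright : ∀ b'', Sum.inr b'' ∈ e '' S := by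
          intro b''
          refine hS'.2 (y := Set.range Sum.inr) ?_ ?_ (Set.mem_range_self b'')
          · rintro x ⟨p, rfl⟩ y ⟨q, rfl⟩ hxy hadj
            simp [hK] at hadj
          · intro z hz
            cases z with
            | inl p => exact absurd hz (hL p)
            | inr q => exact ⟨q, rfl⟩
        exact ⟨Sum.inr b, hb, hright b⟩
    obtain ⟨z, hz1, hz2⟩ := hmeet
    obtain ⟨x, hxC, rfl⟩ := hz1
    obtain ⟨y, hyS, hxy⟩ := hz2
    have hyx : y = x := e.injective hxy
    subst hyx
    exact ⟨y, hxC, hyS⟩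
end

section
/- Every vertex-transitive CIS graph is regular, well-covered (all maximal stable sets have the same size), and co-well-covered (all maximal cliques have the same size). -/
open SimpleGraph Finset

variable {V : Type*}

/-- A graph is vertex-transitive if for every pair of vertices there is an
automorphism mapping one to the other. -/
def SimpleGraph.IsVertexTransitive (G : SimpleGraph V) : Prop :=
  ∀ u v : V, ∃ φ : G ≃g G, φ u = v

/-- The stability (independence) number of a graph, i.e. the clique number of
the complement. -/
noncomputable def SimpleGraph.stabilityNum (G : SimpleGraph V) : ℕ := Gᶜ.cliqueNum

lemma stable_eq_compl_clique (G : SimpleGraph V) :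
    G.IsStableSet = Gᶜ.IsClique := by
  funext s
  unfold SimpleGraph.IsStableSet SimpleGraph.IsClique
  refine propext ⟨fun h u hu v hv huv => ⟨huv, h hu hv huv⟩,
    fun h u hu v hv huv => (h hu hv huv).2⟩

lemma maximal_image (G : SimpleGraph V) {C : Set V} (hC : Maximal G.IsClique C)
    (φ : G ≃g G) : Maximal G.IsClique (φ '' C) := by
  constructor
  · rintro x ⟨a, ha, rfl⟩ y ⟨b, hb, rfl⟩ hxy
    have hab : a ≠ b := fun h => hxy (by rw [h])
    exact φ.map_rel_iff.2 (hC.1 ha hb hab)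
  · intro D hD hsub
    have hE : G.IsClique (φ.symm '' D) := by
      rintro x ⟨a, ha, rfl⟩ y ⟨b, hb, rfl⟩ hxy
      have hab : a ≠ b := fun h => hxy (by rw [h])
      exact φ.symm.map_rel_iff.2 (hD ha hb hab)
    have hCE : C ⊆ φ.symm '' D := fun c hc =>
      ⟨φ c, hsub ⟨c, hc, rfl⟩, φ.symm_apply_apply c⟩
    have := hC.2 hE hCE
    intro d hd
    exact ⟨φ.symm d, this ⟨d, hd, rfl⟩, φ.apply_symm_apply d⟩

lemma clique_mul_stable {G : SimpleGraph V} [Fintype V]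
    (hvt : G.IsVertexTransitive) (hcis : G.IsCIS)
    {C S : Set V} (hC : Maximal G.IsClique C) (hS : Maximal G.IsStableSet S) :
    C.ncard * S.ncard = Fintype.card V := by
  classical
  haveI : Fintype (G ≃g G) :=
    Fintype.ofInjective (fun φ => (φ : V → V)) (fun a b h => by
      exact DFunLike.coe_injective h)
  -- each translate of C meets S in exactly one point
  have hone : ∀ φ : G ≃g G, ((φ '' C) ∩ S).ncard = 1 := by
    intro φ
    obtain ⟨x, hx⟩ := hcis _ _ (maximal_image G hC φ) hS
    have hsub : ((φ '' C) ∩ S) = {x} := by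
      refine Set.Subsingleton.eq_singleton_of_mem ?_ hx
      intro a ha b hb
      by_contra hab
      exact hS.1 ha.2 hb.2 hab ((maximal_image G hC φ).1 ha.1 hb.1 hab)
    rw [hsub, Set.ncard_singleton]
  set Cf : Finset V := C.toFinset with hCf
  set Sf : Finset V := S.toFinset with hSf
  have hCcoe : (Cf : Set V) = C := by simp [hCf]
  have hScoe : (Sf : Set V) = S := by simp [hSf]
  -- count as a filter over Cf
  have hone' : ∀ φ : G ≃g G, (Cf.filter fun c => φ c ∈ Sf).card = 1 := by
    intro φ
    have himg : φ '' ((Cf.filter fun c => φ c ∈ Sf) : Set V) = (φ '' C) ∩ S := by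
      ext y
      constructor
      · rintro ⟨c, hc, rfl⟩
        simp only [Finset.coe_filter, Set.mem_setOf_eq, Finset.mem_coe] at hc
        refine ⟨⟨c, ?_, rfl⟩, ?_⟩
        · have := hc.1; rwa [hCf, Set.mem_toFinset] at this
        · have := hc.2; rwa [hSf, Set.mem_toFinset] at this
      · rintro ⟨⟨c, hc, rfl⟩, hy⟩
        refine ⟨c, ?_, rfl⟩
        simp only [Finset.coe_filter, Set.mem_setOf_eq, Finset.mem_coe]
        exact ⟨by rwa [← Set.mem_toFinset] at hc, by rwa [Set.mem_toFinset.symm] at hy⟩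
    have := hone φ
    rw [← himg, Set.ncard_image_of_injective _ φ.injective, Set.ncard_coe_finset] at this
    exact this
  -- fiber counts
  set m : V → V → ℕ := fun c v => (univ.filter fun φ : G ≃g G => φ c = v).card with hm
  have hmconst : ∀ c v, m c v = m c c := by
    intro c v
    obtain ⟨ψ, hψ⟩ := hvt v c
    refine Finset.card_bij' (fun φ _ => ψ * φ) (fun φ _ => ψ⁻¹ * φ) ?_ ?_ ?_ ?_
    · intro φ hφ
      simp only [Finset.mem_filter, Finset.mem_univ, true_and] at hφ ⊢
      rw [RelIso.mul_apply, hφ, hψ]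
    · intro φ hφ
      simp only [Finset.mem_filter, Finset.mem_univ, true_and] at hφ ⊢
      rw [RelIso.mul_apply, hφ, ← hψ, RelIso.inv_apply_self]
    · intro φ _; exact inv_mul_cancel_left ψ φ
    · intro φ _; exact mul_inv_cancel_left ψ φ
  -- total count of the group
  have hgroup : ∀ c : V, Fintype.card (G ≃g G) = Fintype.card V * m c c := by
    intro c
    have h1 : (univ : Finset (G ≃g G)).card
        = ∑ v ∈ (univ : Finset V), (univ.filter fun φ : G ≃g G => φ c = v).card :=
      Finset.card_eq_sum_card_fiberwise (fun x _ => Finset.mem_univ _)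
    rw [Finset.card_univ] at h1
    rw [h1, Finset.sum_congr rfl fun v _ => hmconst c v, Finset.sum_const,
      Finset.card_univ, smul_eq_mul]
  have hsum : ∑ φ : G ≃g G, (Cf.filter fun c => φ c ∈ Sf).card
      = Fintype.card (G ≃g G) := by
    rw [Finset.sum_congr rfl fun φ _ => hone' φ, Finset.sum_const, smul_eq_mul,
      Finset.card_univ, mul_one]
  have hswap : ∑ φ : G ≃g G, (Cf.filter fun c => φ c ∈ Sf).card
      = ∑ c ∈ Cf, (univ.filter fun φ : G ≃g G => φ c ∈ Sf).card := by
    simp only [Finset.card_filter]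
    exact Finset.sum_comm
  have hfib : ∀ c, (univ.filter fun φ : G ≃g G => φ c ∈ Sf).card = Sf.card * m c c := by
    intro c
    have h1 : (univ.filter fun φ : G ≃g G => φ c ∈ Sf).card
        = ∑ s ∈ Sf, ((univ.filter fun φ : G ≃g G => φ c ∈ Sf).filter fun φ => φ c = s).card :=
      Finset.card_eq_sum_card_fiberwise (fun φ hφ => (Finset.mem_filter.1 hφ).2)
    have h2 : ∀ s ∈ Sf,
        ((univ.filter fun φ : G ≃g G => φ c ∈ Sf).filter fun φ => φ c = s).card = m c c := by
      intro s hs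
      have heq : ((univ.filter fun φ : G ≃g G => φ c ∈ Sf).filter fun φ => φ c = s)
          = univ.filter fun φ : G ≃g G => φ c = s := by
        ext φ
        simp only [Finset.mem_filter, Finset.mem_univ, true_and]
        exact ⟨And.right, fun h => ⟨h.symm ▸ hs, h⟩⟩
      rw [heq]
      exact hmconst c s
    rw [h1, Finset.sum_congr rfl h2, Finset.sum_const, smul_eq_mul]
  have htotal : ∑ c ∈ Cf, Sf.card * m c c = Fintype.card (G ≃g G) := by
    rw [← hsum, hswap]
    exact (Finset.sum_congr rfl fun c _ => hfib c).symm
  have hfinal : Cf.card * Sf.card * Fintype.card (G ≃g G)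
      = Fintype.card V * Fintype.card (G ≃g G) := by
    calc Cf.card * Sf.card * Fintype.card (G ≃g G)
        = ∑ _c ∈ Cf, Sf.card * Fintype.card (G ≃g G) := by
          rw [Finset.sum_const, smul_eq_mul, mul_assoc]
      _ = ∑ c ∈ Cf, Sf.card * (Fintype.card V * m c c) :=
          Finset.sum_congr rfl fun c _ => by rw [hgroup c]
      _ = Fintype.card V * ∑ c ∈ Cf, Sf.card * m c c := by
          rw [Finset.mul_sum]
          exact Finset.sum_congr rfl fun c _ => by ring
      _ = Fintype.card V * Fintype.card (G ≃g G) := by rw [htotal]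
  have hpos : 0 < Fintype.card (G ≃g G) := Fintype.card_pos_iff.2 ⟨RelIso.refl _⟩
  have hkey := Nat.eq_of_mul_eq_mul_right hpos hfinal
  rw [Set.ncard_eq_toFinset_card', Set.ncard_eq_toFinset_card']
  exact hkey

theorem vt_cis_regular_wellCovered (G : SimpleGraph V) [Fintype V]
    (hvt : G.IsVertexTransitive) (hcis : G.IsCIS) :
    (∃ k : ℕ, ∀ v : V, (G.neighborSet v).ncard = k) ∧
    (∀ S : Set V, Maximal G.IsStableSet S → S.ncard = G.stabilityNum) ∧
    (∀ C : Set V, Maximal G.IsClique C → C.ncard = G.cliqueNum) := by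
  classical
  have hreg : ∃ k : ℕ, ∀ v : V, (G.neighborSet v).ncard = k := by
    cases isEmpty_or_nonempty V with
    | inl h => exact ⟨0, fun v => (h.false v).elim⟩
    | inr h =>
      obtain ⟨v₀⟩ := h
      refine ⟨(G.neighborSet v₀).ncard, fun v => ?_⟩
      obtain ⟨φ, hφ⟩ := hvt v₀ v
      have himg : G.neighborSet v = φ '' G.neighborSet v₀ := by
        ext u
        simp only [SimpleGraph.mem_neighborSet, Set.mem_image]
        constructor
        · intro hu
          rw [← hφ] at hu
          have := φ.symm.map_rel_iff.2 hu
          exact ⟨φ.symm u, by simpa using this, φ.apply_symm_apply u⟩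
        · rintro ⟨w, hw, rfl⟩
          rw [← hφ]; exact φ.map_rel_iff.2 hw
      rw [himg, Set.ncard_image_of_injective _ φ.injective]
  refine ⟨hreg, ?_⟩
  cases isEmpty_or_nonempty V with
  | inl h =>
    have hCm : Maximal G.IsClique ∅ :=
      ⟨by simp, fun t _ _ => by rw [Set.eq_empty_of_isEmpty t]⟩
    have hSm : Maximal G.IsStableSet ∅ :=
      ⟨Set.pairwise_empty _, fun t _ _ => by rw [Set.eq_empty_of_isEmpty t]⟩
    exact absurd (hcis ∅ ∅ hCm hSm) (by simp)
  | inr h =>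
    have npos : 0 < Fintype.card V := Fintype.card_pos
    obtain ⟨C₀, -, hC₀⟩ := Finite.exists_le_maximal (G.isClique_empty)
    obtain ⟨S₀, -, hS₀⟩ :=
      Finite.exists_le_maximal (show G.IsStableSet ∅ from Set.pairwise_empty _)
    constructor
    · -- maximal stable sets
      intro S hS
      obtain ⟨t, ht⟩ := Gᶜ.exists_isNClique_cliqueNum
      have htst : G.IsStableSet ↑t := by
        rw [stable_eq_compl_clique]; exact ht.isClique
      obtain ⟨S₁, hsub, hS₁⟩ := Finite.exists_le_maximal htst
      have k1 := clique_mul_stable hvt hcis hC₀ hS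
      have k2 := clique_mul_stable hvt hcis hC₀ hS₁
      have hC₀pos : 0 < C₀.ncard := by
        rcases Nat.eq_zero_or_pos C₀.ncard with h0 | h0
        · rw [h0, zero_mul] at k1; omega
        · exact h0
      have hSS : S.ncard = S₁.ncard :=
        Nat.eq_of_mul_eq_mul_left hC₀pos (k1.trans k2.symm)
      have hle : Gᶜ.cliqueNum ≤ S₁.ncard := by
        have := Set.ncard_le_ncard hsub S₁.toFinite
        rwa [Set.ncard_coe_finset, ht.card_eq] at this
      have hge : S₁.ncard ≤ Gᶜ.cliqueNum := by
        have hcl : Gᶜ.IsClique (↑S₁.toFinset : Set V) := by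
          rw [Set.coe_toFinset, ← stable_eq_compl_clique]; exact hS₁.1
        have := SimpleGraph.IsClique.card_le_cliqueNum (tc := hcl)
        rwa [← Set.ncard_eq_toFinset_card'] at this
      have : S₁.ncard = Gᶜ.cliqueNum := le_antisymm hge hle
      rw [hSS, this]; rfl
    · -- maximal cliques
      intro C hC
      obtain ⟨t, ht⟩ := G.exists_isNClique_cliqueNum
      obtain ⟨C₁, hsub, hC₁⟩ := Finite.exists_le_maximal ht.isClique
      have k1 := clique_mul_stable hvt hcis hC hS₀
      have k2 := clique_mul_stable hvt hcis hC₁ hS₀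
      have hS₀pos : 0 < S₀.ncard := by
        rcases Nat.eq_zero_or_pos S₀.ncard with h0 | h0
        · rw [h0, mul_zero] at k1; omega
        · exact h0
      have hCC : C.ncard = C₁.ncard :=
        Nat.eq_of_mul_eq_mul_right hS₀pos (k1.trans k2.symm)
      have hle : G.cliqueNum ≤ C₁.ncard := by
        have := Set.ncard_le_ncard hsub C₁.toFinite
        rwa [Set.ncard_coe_finset, ht.card_eq] at this
      have hge : C₁.ncard ≤ G.cliqueNum := by
        have hcl : G.IsClique (↑C₁.toFinset : Set V) := by
          rw [Set.coe_toFinset]; exact hC₁.1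
        have := SimpleGraph.IsClique.card_le_cliqueNum (tc := hcl)
        rwa [← Set.ncard_eq_toFinset_card'] at this
      rw [hCC, le_antisymm hge hle]
end

section
/- For every n ≥ 1, the line graph L(K_{n,n}) is a connected vertex-transitive CIS graph of order n² and valency 2(n−1), with stability number n and clique number n. -/
open SimpleGraph

variable {V : Type*}

/-- The line graph of `K_{n,n}`, realized as the `n × n` rook's graph. -/
def rookGraph (n : ℕ) : SimpleGraph (Fin n × Fin n) where
  Adj p q := p ≠ q ∧ (p.1 = q.1 ∨ p.2 = q.2)
  symm := by
    constructor
    rintro p q ⟨hne, h | h⟩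
    · exact ⟨hne.symm, Or.inl h.symm⟩
    · exact ⟨hne.symm, Or.inr h.symm⟩
  loopless := by constructor; rintro p ⟨hne, -⟩; exact hne rfl

/-- The stability (independence) number of a graph, i.e. the clique number of
the complement. -/
noncomputable def SimpleGraph.indepNum' (G : SimpleGraph V) : ℕ := Gᶜ.cliqueNum

instance (n : ℕ) : DecidableRel (rookGraph n).Adj :=
  fun p q => inferInstanceAs (Decidable (p ≠ q ∧ (p.1 = q.1 ∨ p.2 = q.2)))

lemma rook_adj {n : ℕ} {p q : Fin n × Fin n} :
    (rookGraph n).Adj p q ↔ p ≠ q ∧ (p.1 = q.1 ∨ p.2 = q.2) := Iff.rfl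

/-- every maximal stable set hits every row -/
lemma stable_hits_row {n : ℕ} (hn : 1 ≤ n) {S : Set (Fin n × Fin n)}
    (hS : Maximal (rookGraph n).IsStableSet S) (i : Fin n) : ∃ j, (i, j) ∈ S := by
  by_contra h
  push_neg at h
  -- elements of S avoid row i
  have hrow : ∀ p ∈ S, p.1 ≠ i := by
    rintro p hp rfl
    exact h p.2 hp
  have hfin : S.Finite := Set.toFinite S
  classical
  set s : Finset (Fin n × Fin n) := hfin.toFinset with hs
  have hmem : ∀ p, p ∈ s ↔ p ∈ S := fun p => hfin.mem_toFinset
  have hinj1 : Set.InjOn Prod.fst (↑s : Set (Fin n × Fin n)) := by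
    intro p hp q hq hpq
    by_contra hne
    exact hS.1 ((hmem p).1 (Finset.mem_coe.1 hp)) ((hmem q).1 (Finset.mem_coe.1 hq)) hne ⟨hne, Or.inl hpq⟩
  have hinj2 : Set.InjOn Prod.snd (↑s : Set (Fin n × Fin n)) := by
    intro p hp q hq hpq
    by_contra hne
    exact hS.1 ((hmem p).1 (Finset.mem_coe.1 hp)) ((hmem q).1 (Finset.mem_coe.1 hq)) hne ⟨hne, Or.inr hpq⟩
  have hcard1 : (s.image Prod.fst).card = s.card := Finset.card_image_of_injOn hinj1
  have hcard2 : (s.image Prod.snd).card = s.card := Finset.card_image_of_injOn hinj2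
  have hsub : s.image Prod.fst ⊆ Finset.univ.erase i := by
    intro x hx
    obtain ⟨p, hp, rfl⟩ := Finset.mem_image.1 hx
    exact Finset.mem_erase.2 ⟨hrow p ((hmem p).1 hp), Finset.mem_univ _⟩
  have hle : s.card ≤ n - 1 := by
    have := Finset.card_le_card hsub
    simpa [hcard1, Finset.card_erase_of_mem] using this
  -- find a free column j
  have : ∃ j : Fin n, j ∉ s.image Prod.snd := by
    by_contra hj
    push_neg at hj
    have : (s.image Prod.snd) = Finset.univ := Finset.eq_univ_iff_forall.2 hj
    rw [this] at hcard2
    simp [Finset.card_univ] at hcard2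
    omega
  obtain ⟨j, hj⟩ := this
  have hjS : ∀ p ∈ S, p.2 ≠ j := by
    rintro p hp rfl
    exact hj (Finset.mem_image.2 ⟨p, (hmem p).2 hp, rfl⟩)
  -- insert (i,j) keeps stability
  have hstable : (rookGraph n).IsStableSet (insert (i, j) S) := by
    intro p hp q hq hpq hadj
    rcases hp with rfl | hp
    · rcases hq with rfl | hq
      · exact hpq rfl
      · rcases hadj.2 with h1 | h2
        · exact hrow q hq h1.symm
        · exact hjS q hq h2.symm
    · rcases hq with rfl | hq
      · rcases hadj.2 with h1 | h2
        · exact hrow p hp h1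
        · exact hjS p hp h2
      · exact hS.1 hp hq hpq hadj
  have := hS.2 hstable (Set.subset_insert _ _) (Set.mem_insert _ _)
  exact h j this

lemma stable_hits_col {n : ℕ} (hn : 1 ≤ n) {S : Set (Fin n × Fin n)}
    (hS : Maximal (rookGraph n).IsStableSet S) (j : Fin n) : ∃ i, (i, j) ∈ S := by
  -- transpose argument, redo directly by symmetry via the swap map
  classical
  let e : (Fin n × Fin n) ≃ (Fin n × Fin n) := Equiv.prodComm _ _
  have hS' : Maximal (rookGraph n).IsStableSet (e '' S) := by
    constructor
    · rintro p ⟨a, ha, rfl⟩ q ⟨b, hb, rfl⟩ hne hadj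
      refine hS.1 ha hb (fun hab => hne (by rw [hab])) ⟨fun hab => hne (by rw [hab]), ?_⟩
      rcases hadj.2 with h1 | h2
      · exact Or.inr h1
      · exact Or.inl h2
    · intro T hT hsub
      have hsub' : S ⊆ e.symm '' T := by
        intro p hp
        exact ⟨e p, hsub ⟨p, hp, rfl⟩, Equiv.symm_apply_apply _ _⟩
      have hT' : (rookGraph n).IsStableSet (e.symm '' T) := by
        rintro p ⟨a, ha, rfl⟩ q ⟨b, hb, rfl⟩ hne hadj
        refine hT ha hb (fun hab => hne (by rw [hab])) ⟨fun hab => hne (by rw [hab]), ?_⟩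
        rcases hadj.2 with h1 | h2
        · exact Or.inr h1
        · exact Or.inl h2
      have := hS.2 hT' hsub'
      intro t ht
      have : e.symm t ∈ S := this ⟨t, ht, rfl⟩
      exact ⟨e.symm t, this, Equiv.apply_symm_apply _ _⟩
  obtain ⟨i, hi⟩ := stable_hits_row hn hS' j
  obtain ⟨p, hp, hpe⟩ := hi
  have : p = (i, j) := by
    have := hpe
    simp [e, Equiv.prodComm, Prod.ext_iff] at this
    exact Prod.ext this.2 this.1
  exact ⟨i, this ▸ hp⟩

lemma rook_connected (n : ℕ) (hn : 1 ≤ n) : (rookGraph n).Connected := by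
  have : Nonempty (Fin n) := ⟨⟨0, hn⟩⟩
  rw [connected_iff]
  refine ⟨?_, Nonempty.intro (Classical.arbitrary _)⟩
  intro p q
  have step1 : (rookGraph n).Reachable p (p.1, q.2) := by
    by_cases h : p = (p.1, q.2)
    · rw [← h]
    · exact Adj.reachable ⟨h, Or.inl rfl⟩
  have step2 : (rookGraph n).Reachable (p.1, q.2) q := by
    by_cases h : (p.1, q.2) = q
    · rw [h]
    · exact Adj.reachable ⟨h, Or.inr rfl⟩
  exact step1.trans step2

lemma rook_vt (n : ℕ) : (rookGraph n).IsVertexTransitive := by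
  intro u v
  refine ⟨⟨Equiv.prodCongr (Equiv.swap u.1 v.1) (Equiv.swap u.2 v.2), ?_⟩, ?_⟩
  · intro p q
    simp only [rookGraph, Equiv.prodCongr_apply, Prod.map, Prod.ext_iff,
      Equiv.apply_eq_iff_eq, ne_eq]
  · simp [Prod.ext_iff]

lemma rook_cis (n : ℕ) (hn : 1 ≤ n) : (rookGraph n).IsCIS := by
  intro C S hC hS
  -- C is nonempty
  have hCne : C.Nonempty := by
    by_contra h
    rw [Set.not_nonempty_iff_eq_empty] at h
    subst h
    have hp : ((⟨0, hn⟩, ⟨0, hn⟩) : Fin n × Fin n) ∈ (∅ : Set (Fin n × Fin n)) := by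
      refine hC.2 ?_ (Set.empty_subset _) (Set.mem_singleton _)
      intro a ha b hb hab
      simp_all
    simp at hp
  obtain ⟨p, hp⟩ := hCne
  by_cases hrow : ∀ r ∈ C, r.1 = p.1
  · -- C lies in row p.1; S hits that row
    obtain ⟨j, hj⟩ := stable_hits_row hn hS p.1
    have : (p.1, j) ∈ C := by
      refine hC.2 ?_ (Set.subset_insert _ _) (Set.mem_insert _ _)
      intro a ha b hb hab
      rcases ha with rfl | ha
      · rcases hb with rfl | hb
        · exact absurd rfl hab
        · exact ⟨hab, Or.inl (hrow b hb).symm⟩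
      · rcases hb with rfl | hb
        · exact ⟨hab, Or.inl (hrow a ha)⟩
        · exact hC.1 ha hb hab
    exact ⟨(p.1, j), this, hj⟩
  · push_neg at hrow
    obtain ⟨r, hr, hr1⟩ := hrow
    -- r and p are distinct and in the clique, not sharing a row, so share column
    have hrp : r ≠ p := fun h => hr1 (by rw [h])
    have hadj := hC.1 hr hp hrp
    have hr2 : r.2 = p.2 := by
      rcases hadj.2 with h1 | h2
      · exact absurd h1 hr1
      · exact h2
    -- every element of C is in column p.2
    have hcol : ∀ t ∈ C, t.2 = p.2 := by
      intro t ht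
      by_cases htp : t = p
      · rw [htp]
      · by_cases htr : t = r
        · rw [htr]; exact hr2
        · have h1 := (hC.1 ht hp htp).2
          have h2 := (hC.1 ht hr htr).2
          rcases h1 with h1 | h1
          · rcases h2 with h2 | h2
            · exact absurd (h1.symm.trans h2) (fun hh => hr1 hh.symm)
            · rw [h2, hr2]
          · exact h1
    obtain ⟨i, hi⟩ := stable_hits_col hn hS p.2
    have : (i, p.2) ∈ C := by
      refine hC.2 ?_ (Set.subset_insert _ _) (Set.mem_insert _ _)
      intro a ha b hb hab
      rcases ha with rfl | ha
      · rcases hb with rfl | hb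
        · exact absurd rfl hab
        · exact ⟨hab, Or.inr (hcol b hb).symm⟩
      · rcases hb with rfl | hb
        · exact ⟨hab, Or.inr (hcol a ha)⟩
        · exact hC.1 ha hb hab
    exact ⟨(i, p.2), this, hi⟩

lemma rook_degree (n : ℕ) (v : Fin n × Fin n) :
    ((rookGraph n).neighborSet v).ncard = 2 * (n - 1) := by
  classical
  rw [Set.ncard_eq_toFinset_card']
  have : ((rookGraph n).neighborSet v).toFinset = (rookGraph n).neighborFinset v := rfl
  rw [this]
  have hset : (rookGraph n).neighborFinset v =
      (({v.1} : Finset (Fin n)) ×ˢ (({v.2} : Finset (Fin n))ᶜ)) ∪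
        ((({v.1} : Finset (Fin n))ᶜ) ×ˢ ({v.2} : Finset (Fin n))) := by
    ext q
    simp only [mem_neighborFinset, rook_adj, Finset.mem_union, Finset.mem_product,
      Finset.mem_singleton, Finset.mem_compl, ne_eq, Prod.ext_iff, not_and]
    constructor
    · rintro ⟨hne, h | h⟩
      · exact Or.inl ⟨h.symm, fun h2 => hne h h2.symm⟩
      · exact Or.inr ⟨fun h1 => hne h1.symm h, h.symm⟩
    · rintro (⟨h1, h2⟩ | ⟨h1, h2⟩)
      · exact ⟨fun _ hb => h2 hb.symm, Or.inl h1.symm⟩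
      · exact ⟨fun ha => absurd ha.symm h1, Or.inr h2.symm⟩
  rw [hset, Finset.card_union_of_disjoint, Finset.card_product, Finset.card_product]
  · simp [Finset.card_compl]
    ring
  · rw [Finset.disjoint_left]
    rintro q hq hq'
    simp only [Finset.mem_product, Finset.mem_singleton, Finset.mem_compl] at hq hq'
    exact hq'.1 hq.1

lemma rook_cliqueNum (n : ℕ) (hn : 1 ≤ n) : (rookGraph n).cliqueNum = n := by
  classical
  refine le_antisymm ?_ ?_
  · refine csSup_le ⟨0, ∅, by simp [isNClique_empty]⟩ ?_
    rintro m ⟨s, hs, rfl⟩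
    -- any clique has card ≤ n
    by_cases h2 : s.card ≤ 1
    · omega
    · push_neg at h2
      obtain ⟨p, hp, q, hq, hpq⟩ := Finset.one_lt_card.1 h2
      have hadj := hs ((Finset.mem_coe).2 hp) ((Finset.mem_coe).2 hq) hpq
      rcases hadj.2 with h | h
      · -- s lies in row p.1, so snd is injective on s
        have hrow : ∀ t ∈ s, t.1 = p.1 := by
          intro t ht
          by_cases htp : t = p
          · rw [htp]
          · by_cases htq : t = q
            · rw [htq, ← h]
            · have h1 := (hs ((Finset.mem_coe).2 ht) ((Finset.mem_coe).2 hp) htp).2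
              have h2 := (hs ((Finset.mem_coe).2 ht) ((Finset.mem_coe).2 hq) htq).2
              rcases h1 with h1 | h1
              · exact h1
              · rcases h2 with h2 | h2
                · rw [h2, h]
                · exact absurd (h1.symm.trans h2)
                    (fun hh => hpq (Prod.ext h (by rw [← h1, h2])))
        calc s.card = (s.image Prod.snd).card := by
              rw [Finset.card_image_of_injOn]
              intro a ha b hb hab
              exact Prod.ext ((hrow a (Finset.mem_coe.1 ha)).trans
                (hrow b (Finset.mem_coe.1 hb)).symm) hab
          _ ≤ n := by simpa using Finset.card_le_card (Finset.subset_univ (s.image Prod.snd))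
      · have hcol : ∀ t ∈ s, t.2 = p.2 := by
          intro t ht
          by_cases htp : t = p
          · rw [htp]
          · by_cases htq : t = q
            · rw [htq, ← h]
            · have h1 := (hs ((Finset.mem_coe).2 ht) ((Finset.mem_coe).2 hp) htp).2
              have h2 := (hs ((Finset.mem_coe).2 ht) ((Finset.mem_coe).2 hq) htq).2
              rcases h1 with h1 | h1
              · rcases h2 with h2 | h2
                · exact absurd (h1.symm.trans h2)
                    (fun hh => hpq (Prod.ext (by rw [← h1, h2]) h))
                · rw [h2, h]
              · exact h1
        calc s.card = (s.image Prod.fst).card := by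
              rw [Finset.card_image_of_injOn]
              intro a ha b hb hab
              exact Prod.ext hab ((hcol a (Finset.mem_coe.1 ha)).trans
                (hcol b (Finset.mem_coe.1 hb)).symm)
          _ ≤ n := by simpa using Finset.card_le_card (Finset.subset_univ (s.image Prod.fst))
  · -- a row is an n-clique
    have hcl : (rookGraph n).IsClique ↑(({(⟨0, hn⟩ : Fin n)} ×ˢ Finset.univ : Finset (Fin n × Fin n))) := by
      intro a ha b hb hab
      simp only [Finset.coe_product, Set.mem_prod, Finset.coe_singleton,
        Set.mem_singleton_iff] at ha hb
      exact ⟨hab, Or.inl (ha.1.trans hb.1.symm)⟩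
    have hcard : ({(⟨0, hn⟩ : Fin n)} ×ˢ (Finset.univ : Finset (Fin n))).card = n := by
      simp
    calc n = ({(⟨0, hn⟩ : Fin n)} ×ˢ (Finset.univ : Finset (Fin n))).card := hcard.symm
      _ ≤ (rookGraph n).cliqueNum := IsClique.card_le_cliqueNum (tc := hcl)

lemma rook_indepNum (n : ℕ) (hn : 1 ≤ n) : (rookGraph n).indepNum' = n := by
  classical
  unfold SimpleGraph.indepNum'
  have hcompl : ∀ p q : Fin n × Fin n,
      (rookGraph n)ᶜ.Adj p q ↔ p ≠ q ∧ p.1 ≠ q.1 ∧ p.2 ≠ q.2 := by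
    intro p q
    simp only [compl_adj, rook_adj, ne_eq, not_and, not_or]
    constructor
    · rintro ⟨hne, h⟩
      rcases h hne with ⟨h1, h2⟩
      exact ⟨hne, h1, h2⟩
    · rintro ⟨hne, h1, h2⟩
      exact ⟨hne, fun _ => ⟨h1, h2⟩⟩
  refine le_antisymm ?_ ?_
  · refine csSup_le ⟨0, ∅, by simp [isNClique_empty]⟩ ?_
    rintro m ⟨s, hs, rfl⟩
    calc s.card = (s.image Prod.fst).card := by
          rw [Finset.card_image_of_injOn]
          intro a ha b hb hab
          by_contra hne
          exact ((hcompl a b).1 (hs ha hb hne)).2.1 hab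
      _ ≤ n := by simpa using Finset.card_le_card (Finset.subset_univ (s.image Prod.fst))
  · -- the diagonal is an n-clique of the complement
    set d : Finset (Fin n × Fin n) := Finset.univ.image (fun i => (i, i)) with hd
    have hcl : (rookGraph n)ᶜ.IsClique ↑d := by
      rintro a ha b hb hab
      simp only [hd, Finset.coe_image, Set.mem_image, Finset.coe_univ, Set.image_univ,
        Set.mem_range] at ha hb
      obtain ⟨i, rfl⟩ := ha
      obtain ⟨j, rfl⟩ := hb
      have hij : i ≠ j := fun h => hab (by rw [h])
      exact (hcompl _ _).2 ⟨hab, hij, hij⟩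
    have hcard : d.card = n := by
      rw [hd, Finset.card_image_of_injective]
      · simp
      · intro a b hab
        exact (Prod.ext_iff.1 hab).1
    calc n = d.card := hcard.symm
      _ ≤ (rookGraph n)ᶜ.cliqueNum := IsClique.card_le_cliqueNum (tc := hcl)

theorem rookGraph_properties (n : ℕ) (hn : 1 ≤ n) :
    (rookGraph n).Connected ∧
    (rookGraph n).IsVertexTransitive ∧
    (rookGraph n).IsCIS ∧
    Fintype.card (Fin n × Fin n) = n ^ 2 ∧
    (∀ v : Fin n × Fin n, ((rookGraph n).neighborSet v).ncard = 2 * (n - 1)) ∧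
    (rookGraph n).indepNum' = n ∧
    (rookGraph n).cliqueNum = n := by
  exact ⟨rook_connected n hn, rook_vt n, rook_cis n hn, by simp [sq],
    fun v => rook_degree n v, rook_indepNum n hn, rook_cliqueNum n hn⟩
end

section
/- For n ≥ 4, the graph Q_n is well-covered with stability number n: every maximal stable set of Q_n has size exactly n, containing exactly one vertex with each first coordinate. -/
open SimpleGraph

variable {V : Type*}

/-- The graph `Q_n`: vertex set `Z_n × Z_2 × Z_2`, where `(i,x,y)` and `(j,u,v)`
are adjacent iff `j = i+1` and `u = y`, or `i = j+1` and `y = v`, or `i = j` and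
`(x,y) ≠ (u,v)`. -/
def Qgraph (n : ℕ) : SimpleGraph (ZMod n × ZMod 2 × ZMod 2) where
  Adj p q := p ≠ q ∧
    ((q.1 = p.1 + 1 ∧ q.2.1 = p.2.2) ∨ (p.1 = q.1 + 1 ∧ p.2.1 = q.2.2) ∨ p.1 = q.1)
  symm := by
    constructor
    rintro p q ⟨hne, h | h | h⟩
    · exact ⟨hne.symm, Or.inr (Or.inl h)⟩
    · exact ⟨hne.symm, Or.inl h⟩
    · exact ⟨hne.symm, Or.inr (Or.inr h.symm)⟩
  loopless := by constructor; rintro p ⟨hne, -⟩; exact hne rfl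

theorem Qgraph_wellCovered (n : ℕ) (hn : 4 ≤ n)
    (S : Set (ZMod n × ZMod 2 × ZMod 2)) (hS : Maximal (Qgraph n).IsStableSet S) :
    S.ncard = n ∧ ∀ i : ZMod n, ∃! v, v ∈ S ∧ v.1 = i := by
  haveI : NeZero n := ⟨by omega⟩
  have huniq : ∀ v ∈ S, ∀ w ∈ S, v.1 = w.1 → v = w := by
    intro v hv w hw h
    by_contra hne
    exact hS.1 hv hw hne ⟨hne, Or.inr (Or.inr h)⟩
  have h2 : ∀ a : ZMod 2, a + 1 ≠ a := by decide
  have hex : ∀ i : ZMod n, ∃ v ∈ S, v.1 = i := by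
    intro i
    by_contra hno
    push_neg at hno
    obtain ⟨x, hx⟩ : ∃ x : ZMod 2, ∀ w ∈ S, i = w.1 + 1 → x ≠ w.2.2 := by
      by_cases h : ∃ w ∈ S, i = w.1 + 1
      · obtain ⟨w₀, hw₀, hw₀i⟩ := h
        refine ⟨w₀.2.2 + 1, ?_⟩
        intro w hw hiw
        have hw1 : w.1 = w₀.1 := by
          have := hiw.symm.trans hw₀i
          exact add_right_cancel this
        rw [huniq w hw w₀ hw₀ hw1]
        exact h2 _
      · exact ⟨0, fun w hw hiw => absurd ⟨w, hw, hiw⟩ h⟩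
    obtain ⟨y, hy⟩ : ∃ y : ZMod 2, ∀ w ∈ S, w.1 = i + 1 → w.2.1 ≠ y := by
      by_cases h : ∃ w ∈ S, w.1 = i + 1
      · obtain ⟨w₀, hw₀, hw₀i⟩ := h
        refine ⟨w₀.2.1 + 1, ?_⟩
        intro w hw hiw
        have hw1 : w.1 = w₀.1 := hiw.trans hw₀i.symm
        rw [huniq w hw w₀ hw₀ hw1]
        exact (h2 _).symm
      · exact ⟨0, fun w hw hiw => absurd ⟨w, hw, hiw⟩ h⟩
    set v : ZMod n × ZMod 2 × ZMod 2 := (i, x, y) with hv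
    have hnonadj : ∀ w ∈ S, ¬ (Qgraph n).Adj v w := by
      rintro w hw ⟨hne, hc | hc | hc⟩
      · exact hy w hw hc.1 hc.2
      · exact hx w hw hc.1 hc.2
      · exact hno w hw hc.symm
    have hsym : Symmetric fun u w => ¬ (Qgraph n).Adj u w := by
      intro u w h hadj; exact h hadj.symm
    have hstable : (Qgraph n).IsStableSet (insert v S) := by
      haveI : Std.Symm (fun u w => ¬ (Qgraph n).Adj u w) := ⟨fun a b h => hsym h⟩
      rw [SimpleGraph.IsStableSet, Set.pairwise_insert_of_symm]
      exact ⟨hS.1, fun w hw _ => hnonadj w hw⟩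
    have : insert v S ⊆ S := hS.2 hstable (Set.subset_insert v S)
    exact hno v (this (Set.mem_insert v S)) rfl
  have hinj : Set.InjOn Prod.fst S := fun v hv w hw h => huniq v hv w hw h
  have himg : Prod.fst '' S = Set.univ := by
    ext i
    simp only [Set.mem_univ, iff_true, Set.mem_image]
    obtain ⟨w, hw, hwi⟩ := hex i
    exact ⟨w, hw, hwi⟩
  constructor
  · calc S.ncard = (Prod.fst '' S).ncard := (Set.ncard_image_of_injOn hinj).symm
      _ = n := by rw [himg, Set.ncard_univ, Nat.card_zmod]
  · intro i
    obtain ⟨w, hw, hwi⟩ := hex i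
    exact ⟨w, ⟨hw, hwi⟩, fun u ⟨hu, hui⟩ => huniq u hu w hw (hui.trans hwi.symm)⟩
end

section
/- For n ≥ 4, the graph Q_n is co-well-covered with clique number 4: every maximal clique of Q_n has size exactly 4. -/
open SimpleGraph

variable {V : Type*}

lemma Qgraph.zmod_facts (n : ℕ) (hn : 4 ≤ n) :
    (1 : ZMod n) ≠ 0 ∧ (2 : ZMod n) ≠ 0 ∧ (3 : ZMod n) ≠ 0 := by
  haveI : NeZero n := ⟨by omega⟩
  have hk : ∀ k : ℕ, 0 < k → k < n → (k : ZMod n) ≠ 0 := by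
    intro k hk0 hkn
    rw [Ne, ZMod.natCast_eq_zero_iff]
    intro h; have := Nat.le_of_dvd hk0 h; omega
  exact ⟨by simpa using hk 1 (by omega) (by omega),
    by simpa using hk 2 (by omega) (by omega),
    by simpa using hk 3 (by omega) (by omega)⟩

lemma Qgraph.zmod2_cases (a : ZMod 2) : a = 0 ∨ a = 1 := by revert a; decide

/-- The key case: the clique contains two vertices in consecutive layers. -/
lemma Qgraph.aux (n : ℕ) (hn : 4 ≤ n)
    (C : Set (ZMod n × ZMod 2 × ZMod 2)) (hC : Maximal (Qgraph n).IsClique C)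
    (p q : ZMod n × ZMod 2 × ZMod 2) (hp : p ∈ C) (hq : q ∈ C)
    (hq1 : q.1 = p.1 + 1) (hq2 : q.2.1 = p.2.2) : C.ncard = 4 := by
  obtain ⟨h1, h2, h3⟩ := Qgraph.zmod_facts n hn
  set i := p.1 with hi
  set y := p.2.2 with hy
  set S : Set (ZMod n × ZMod 2 × ZMod 2) :=
    {(i, 0, y), (i, 1, y), (i + 1, y, 0), (i + 1, y, 1)} with hS
  have hii : i ≠ i + 1 := fun h => h1 (by linear_combination -h)
  -- S is a clique
  have hSclique : (Qgraph n).IsClique S := by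
    intro a ha b hb hne
    refine ⟨hne, ?_⟩
    simp only [hS, Set.mem_insert_iff, Set.mem_singleton_iff] at ha hb
    rcases ha with rfl | rfl | rfl | rfl <;> rcases hb with rfl | rfl | rfl | rfl <;>
      first
        | exact absurd rfl hne
        | exact Or.inr (Or.inr rfl)
        | exact Or.inl ⟨rfl, rfl⟩
        | exact Or.inr (Or.inl ⟨rfl, rfl⟩)
  -- C ⊆ S
  have hCS : C ⊆ S := by
    intro r hr
    have hr1 : r.1 = i ∨ r.1 = i + 1 := by
      rcases eq_or_ne r p with rfl | hrp
      · exact Or.inl rfl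
      rcases eq_or_ne r q with rfl | hrq
      · exact Or.inr hq1
      obtain ⟨-, hP⟩ := hC.1 hr hp hrp
      obtain ⟨-, hQ⟩ := hC.1 hr hq hrq
      rcases hP with ⟨e1, -⟩ | ⟨e1, -⟩ | e1
      · -- e1 : p.1 = r.1 + 1
        exfalso
        rcases hQ with ⟨f1, -⟩ | ⟨f1, -⟩ | f1
        · exact h1 (by linear_combination f1 - e1 - hq1)
        · exact h3 (by linear_combination - e1 - f1 - hq1)
        · exact h2 (by linear_combination - e1 - f1 - hq1)
      · exact Or.inr e1
      · exact Or.inl e1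
    simp only [hS, Set.mem_insert_iff, Set.mem_singleton_iff]
    rcases hr1 with hri | hri
    · -- layer i : show r.2.2 = y
      have hrq : r ≠ q := fun h => hii (hri.symm.trans ((congrArg Prod.fst h).trans hq1))
      have hr22 : r.2.2 = y := by
        rcases eq_or_ne r p with rfl | hrp
        · rfl
        obtain ⟨-, hQ⟩ := hC.1 hr hq hrq
        rcases hQ with ⟨f1, f2⟩ | ⟨f1, -⟩ | f1
        · rw [← f2, hq2]
        · exact absurd (show (2 : ZMod n) = 0 by linear_combination hri - f1 - hq1) h2
        · exact absurd (show (1 : ZMod n) = 0 by linear_combination hri - f1 - hq1) h1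
      rcases Qgraph.zmod2_cases r.2.1 with h | h
      · exact Or.inl (Prod.ext_iff.mpr ⟨hri, Prod.ext_iff.mpr ⟨h, hr22⟩⟩)
      · exact Or.inr (Or.inl (Prod.ext_iff.mpr ⟨hri, Prod.ext_iff.mpr ⟨h, hr22⟩⟩))
    · -- layer i+1 : show r.2.1 = y
      have hrp : r ≠ p := fun h => hii (hi.trans ((congrArg Prod.fst h).symm.trans hri))
      have hr21 : r.2.1 = y := by
        rcases eq_or_ne r q with rfl | hrq
        · exact hq2
        obtain ⟨-, hP⟩ := hC.1 hr hp hrp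
        rcases hP with ⟨e1, -⟩ | ⟨-, e2⟩ | e1
        · exact absurd (show (2 : ZMod n) = 0 by linear_combination - e1 - hri) h2
        · exact e2
        · exact absurd (show (1 : ZMod n) = 0 by linear_combination e1 - hri) h1
      rcases Qgraph.zmod2_cases r.2.2 with h | h
      · exact Or.inr (Or.inr (Or.inl (Prod.ext_iff.mpr ⟨hri, Prod.ext_iff.mpr ⟨hr21, h⟩⟩)))
      · exact Or.inr (Or.inr (Or.inr (Prod.ext_iff.mpr ⟨hri, Prod.ext_iff.mpr ⟨hr21, h⟩⟩)))
  have hCeq : C = S := le_antisymm hCS (hC.2 hSclique hCS)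
  rw [hCeq, hS]
  have d01 : (0 : ZMod 2) ≠ 1 := by decide
  rw [Set.ncard_insert_of_notMem (by
      simp only [Set.mem_insert_iff, Set.mem_singleton_iff]
      push_neg
      refine ⟨?_, ?_, ?_⟩ <;> intro h <;>
        first
          | exact d01 (congrArg (fun z => z.2.1) h)
          | exact hii (congrArg Prod.fst h)
          | exact d01 (congrArg (fun z => z.2.2) h))]
  rw [Set.ncard_insert_of_notMem (by
      simp only [Set.mem_insert_iff, Set.mem_singleton_iff]
      push_neg
      refine ⟨?_, ?_⟩ <;> intro h <;> exact hii (congrArg Prod.fst h))]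
  rw [Set.ncard_insert_of_notMem (by
      simp only [Set.mem_singleton_iff]
      intro h; exact d01 (congrArg (fun z => z.2.2) h)), Set.ncard_singleton]

theorem Qgraph_coWellCovered (n : ℕ) (hn : 4 ≤ n)
    (C : Set (ZMod n × ZMod 2 × ZMod 2)) (hC : Maximal (Qgraph n).IsClique C) :
    C.ncard = 4 := by
  -- C is nonempty
  obtain ⟨p, hp⟩ : C.Nonempty := by
    rcases Set.eq_empty_or_nonempty C with rfl | h
    · exact absurd (hC.2 (isClique_singleton ((0 : ZMod n), (0 : ZMod 2), (0 : ZMod 2)))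
        (Set.empty_subset _) rfl) (Set.notMem_empty _)
    · exact h
  by_cases hall : ∀ r ∈ C, r.1 = p.1
  · -- C is a single layer
    set i := p.1 with hi
    set S : Set (ZMod n × ZMod 2 × ZMod 2) :=
      {(i, 0, 0), (i, 0, 1), (i, 1, 0), (i, 1, 1)} with hS
    have hSclique : (Qgraph n).IsClique S := by
      intro a ha b hb hne
      refine ⟨hne, Or.inr (Or.inr ?_)⟩
      simp only [hS, Set.mem_insert_iff, Set.mem_singleton_iff] at ha hb
      rcases ha with rfl | rfl | rfl | rfl <;> rcases hb with rfl | rfl | rfl | rfl <;> rfl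
    have hCS : C ⊆ S := by
      intro r hr
      have hri := hall r hr
      simp only [hS, Set.mem_insert_iff, Set.mem_singleton_iff]
      rcases Qgraph.zmod2_cases r.2.1 with ha | ha <;>
        rcases Qgraph.zmod2_cases r.2.2 with hb | hb
      · exact Or.inl (Prod.ext_iff.mpr ⟨hri, Prod.ext_iff.mpr ⟨ha, hb⟩⟩)
      · exact Or.inr (Or.inl (Prod.ext_iff.mpr ⟨hri, Prod.ext_iff.mpr ⟨ha, hb⟩⟩))
      · exact Or.inr (Or.inr (Or.inl (Prod.ext_iff.mpr ⟨hri, Prod.ext_iff.mpr ⟨ha, hb⟩⟩)))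
      · exact Or.inr (Or.inr (Or.inr (Prod.ext_iff.mpr ⟨hri, Prod.ext_iff.mpr ⟨ha, hb⟩⟩)))
    have hCeq : C = S := le_antisymm hCS (hC.2 hSclique hCS)
    rw [hCeq, hS]
    have d01 : (0 : ZMod 2) ≠ 1 := by decide
    rw [Set.ncard_insert_of_notMem (by
        simp only [Set.mem_insert_iff, Set.mem_singleton_iff]
        push_neg
        refine ⟨?_, ?_, ?_⟩ <;> intro h <;>
          first
            | exact d01 (congrArg (fun z => z.2.1) h)
            | exact d01 (congrArg (fun z => z.2.2) h))]
    rw [Set.ncard_insert_of_notMem (by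
        simp only [Set.mem_insert_iff, Set.mem_singleton_iff]
        push_neg
        refine ⟨?_, ?_⟩ <;> intro h <;> exact d01 (congrArg (fun z => z.2.1) h))]
    rw [Set.ncard_insert_of_notMem (by
        simp only [Set.mem_singleton_iff]
        intro h; exact d01 (congrArg (fun z => z.2.2) h)), Set.ncard_singleton]
  · push_neg at hall
    obtain ⟨q, hq, hq1⟩ := hall
    have hpq : p ≠ q := fun h => hq1 (h ▸ rfl)
    obtain ⟨-, hA⟩ := hC.1 hp hq hpq
    rcases hA with ⟨e1, e2⟩ | ⟨e1, e2⟩ | e1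
    · exact Qgraph.aux n hn C hC p q hp hq e1 e2
    · exact Qgraph.aux n hn C hC q p hq hp e1 e2
    · exact absurd e1.symm hq1
end

section
/- Let Γ be a well-covered graph with no isolated vertex, let S be a maximal stable set, and let v ∉ S be a vertex with |S ∩ N(v)| = ρ(Γ). If S' is a maximal stable set containing {v} ∪ (S \ N(v)) and W = S' \ (S ∪ {v}), then |S' \ S| = ρ(Γ), |W| = ρ(Γ) − 1, W ∩ N[v] = ∅, and every vertex of W is adjacent to every vertex of S ∩ N(v). -/
open SimpleGraph

variable {V : Type*}

/-- `ρ(Γ)`: the minimum over all non-isolated vertices `v` and maximal stable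
sets `S` not containing `v` of `|S ∩ N(v)|`. -/
noncomputable def SimpleGraph.rho (G : SimpleGraph V) : ℕ :=
  sInf { k : ℕ | ∃ (v : V) (S : Set V), (G.neighborSet v).Nonempty ∧
    Maximal G.IsStableSet S ∧ v ∉ S ∧ (S ∩ G.neighborSet v).ncard = k }

/-- Every stable set extends to a maximal stable set. -/
lemma exists_maximal_stable_superset (G : SimpleGraph V) (A : Set V)
    (hA : G.IsStableSet A) : ∃ T, A ⊆ T ∧ Maximal G.IsStableSet T := by
  obtain ⟨m, hm, hmax⟩ := zorn_subset_nonempty {s : Set V | G.IsStableSet s}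
    (fun c hc hchain hne => by
      refine ⟨⋃₀ c, ?_, fun s hs => le_sSup hs⟩
      intro x hx y hy hxy
      obtain ⟨s, hs, hxs⟩ := hx
      obtain ⟨t, ht, hyt⟩ := hy
      rcases hchain.total hs ht with h | h
      · exact hc ht (h hxs) hyt hxy
      · exact hc hs hxs (h hyt) hxy) A hA
  exact ⟨m, hm, hmax⟩

theorem wellCovered_intersection_lemma (G : SimpleGraph V) [Fintype V]
    (hwc : ∀ S T : Set V, Maximal G.IsStableSet S → Maximal G.IsStableSet T →
      S.ncard = T.ncard)
    (hniso : ∀ v : V, (G.neighborSet v).Nonempty)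
    (S : Set V) (hS : Maximal G.IsStableSet S)
    (v : V) (hv : v ∉ S) (hρ : (S ∩ G.neighborSet v).ncard = G.rho)
    (S' : Set V) (hS' : Maximal G.IsStableSet S')
    (hsub : insert v (S \ G.neighborSet v) ⊆ S')
    (W : Set V) (hW : W = S' \ (S ∪ {v})) :
    (S' \ S).ncard = G.rho ∧
    W.ncard = G.rho - 1 ∧
    W ∩ insert v (G.neighborSet v) = ∅ ∧
    ∀ w ∈ W, ∀ u ∈ S ∩ G.neighborSet v, G.Adj w u := by
  classical
  have hvS' : v ∈ S' := hsub (Set.mem_insert _ _)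
  -- S' contains no neighbor of v
  have hS'N : S' ∩ G.neighborSet v = ∅ := by
    ext u
    simp only [Set.mem_inter_iff, Set.mem_empty_iff_false, iff_false, not_and]
    intro huS' hu
    have hne : v ≠ u := fun h => G.irrefl (h ▸ hu)
    exact hS'.1 hvS' huS' hne hu
  -- S' ∩ S = S \ N(v)
  have hS'S : S' ∩ S = S \ G.neighborSet v := by
    apply Set.Subset.antisymm
    · rintro x ⟨hxS', hxS⟩
      refine ⟨hxS, fun hxN => ?_⟩
      have : x ∈ S' ∩ G.neighborSet v := ⟨hxS', hxN⟩
      rw [hS'N] at this; exact this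
    · intro x hx
      exact ⟨hsub (Set.mem_insert_of_mem _ hx), hx.1⟩
  have hcard : S'.ncard = S.ncard := hwc _ _ hS' hS
  -- ρ ≤ |S|
  have h1 : (S ∩ G.neighborSet v).ncard + (S \ G.neighborSet v).ncard = S.ncard :=
    Set.ncard_inter_add_ncard_diff_eq_ncard S (G.neighborSet v)
  have h2 : (S' ∩ S).ncard + (S' \ S).ncard = S'.ncard :=
    Set.ncard_inter_add_ncard_diff_eq_ncard S' S
  have hdiff : (S' \ S).ncard = G.rho := by
    rw [hS'S] at h2
    omega
  refine ⟨hdiff, ?_, ?_, ?_⟩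
  -- |W| = ρ - 1
  · have hWrw : W = (S' \ S) \ {v} := by
      rw [hW]; ext x; simp only [Set.mem_diff, Set.mem_union, Set.mem_singleton_iff]; tauto
    have hvmem : v ∈ S' \ S := ⟨hvS', hv⟩
    rw [hWrw, Set.ncard_diff_singleton_of_mem hvmem, hdiff]
  -- W ∩ N[v] = ∅
  · ext x
    simp only [Set.mem_inter_iff, Set.mem_insert_iff, Set.mem_empty_iff_false, iff_false,
      not_and]
    rintro hxW (rfl | hxN)
    · exact (hW ▸ hxW).2 (Set.mem_union_right _ rfl)
    · have hxS' : x ∈ S' := (hW ▸ hxW).1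
      have : x ∈ S' ∩ G.neighborSet v := ⟨hxS', hxN⟩
      rw [hS'N] at this; exact this
  -- adjacency
  · rintro w hwW u ⟨huS, huN⟩
    by_contra hadj
    have hwS' : w ∈ S' := (hW ▸ hwW).1
    have hwS : w ∉ S := fun h => (hW ▸ hwW).2 (Set.mem_union_left _ h)
    have hwv : w ≠ v := fun h => (hW ▸ hwW).2 (Set.mem_union_right _ h)
    have hwN : w ∉ G.neighborSet v := fun h => by
      have : w ∈ S' ∩ G.neighborSet v := ⟨hwS', h⟩
      rw [hS'N] at this; exact this
    -- A = insert w (insert u (S \ N(v))) is stable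
    set A : Set V := insert w (insert u (S \ G.neighborSet v)) with hA
    have hwu : w ≠ u := fun h => hwS (h ▸ huS)
    have hAstable : G.IsStableSet A := by
      intro x hx y hy hxy
      have key : ∀ a b : V, a = w → (b = u ∨ b ∈ S \ G.neighborSet v) → ¬ G.Adj a b := by
        rintro a b rfl (rfl | hb)
        · intro h; exact hadj h
        · intro h
          exact hS'.1 hwS' (hsub (Set.mem_insert_of_mem _ hb)) (fun he => hwS (he ▸ hb.1)) h
      have keyS : ∀ a b, (a = u ∨ a ∈ S \ G.neighborSet v) → (b = u ∨ b ∈ S \ G.neighborSet v)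
          → a ≠ b → ¬ G.Adj a b := by
        rintro a b (rfl | ha) (rfl | hb) hab
        · exact absurd rfl hab
        · exact hS.1 huS hb.1 hab
        · exact hS.1 ha.1 huS hab
        · exact hS.1 ha.1 hb.1 hab
      rcases hx with rfl | hx
      · exact key _ _ rfl (by simpa using hy.resolve_left (Ne.symm hxy))
      · rcases hy with rfl | hy
        · exact fun h => key _ _ rfl (by simpa using hx) h.symm
        · exact keyS _ _ (by simpa using hx) (by simpa using hy) hxy
    obtain ⟨T, hAT, hT⟩ := exists_maximal_stable_superset G A hAstable
    have huT : u ∈ T := hAT (Set.mem_insert_of_mem _ (Set.mem_insert _ _))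
    have hwT : w ∈ T := hAT (Set.mem_insert _ _)
    have hvT : v ∉ T := fun h => hT.1 h huT (fun he => G.irrefl (he ▸ huN)) huN
    -- ρ ≤ |T ∩ N(v)|
    have hrho_le : G.rho ≤ (T ∩ G.neighborSet v).ncard :=
      Nat.sInf_le ⟨v, T, hniso v, hT, hvT, rfl⟩
    -- the disjoint pieces inside T
    have hsub2 : (S \ G.neighborSet v) ∪ insert w (T ∩ G.neighborSet v) ⊆ T := by
      rintro x (hx | hx)
      · exact hAT (Set.mem_insert_of_mem _ (Set.mem_insert_of_mem _ hx))
      · rcases hx with rfl | hx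
        · exact hwT
        · exact hx.1
    have hdisj : Disjoint (S \ G.neighborSet v) (insert w (T ∩ G.neighborSet v)) := by
      rw [Set.disjoint_left]
      rintro x hx (rfl | hx2)
      · exact hwS hx.1
      · exact hx.2 hx2.2
    have hcardU : ((S \ G.neighborSet v) ∪ insert w (T ∩ G.neighborSet v)).ncard
        = (S \ G.neighborSet v).ncard + (1 + (T ∩ G.neighborSet v).ncard) := by
      rw [Set.ncard_union_eq hdisj (Set.toFinite _) (Set.toFinite _),
        Set.ncard_insert_of_notMem (fun h => hwN h.2) (Set.toFinite _)]
      omega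
    have hle : ((S \ G.neighborSet v) ∪ insert w (T ∩ G.neighborSet v)).ncard ≤ T.ncard :=
      Set.ncard_le_ncard hsub2 (Set.toFinite _)
    have hTS : T.ncard = S.ncard := hwc _ _ hT hS
    omega
end

section
/- If Γ is a connected, k-regular, well-covered, co-well-covered graph, then either ω(Γ) ≤ (2/3)(k+1) or Γ is a complete graph. -/
open SimpleGraph

variable {V : Type*}

theorem wellCovered_coWellCovered_cliqueNum_bound (G : SimpleGraph V) [Fintype V]
    (hconn : G.Connected) (k : ℕ)
    (hreg : ∀ v : V, (G.neighborSet v).ncard = k)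
    (hwc : ∀ S T : Set V, Maximal G.IsStableSet S → Maximal G.IsStableSet T →
      S.ncard = T.ncard)
    (hcwc : ∀ C D : Set V, Maximal G.IsClique C → Maximal G.IsClique D →
      C.ncard = D.ncard) :
    3 * G.cliqueNum ≤ 2 * (k + 1) ∨ G = ⊤ := by
  classical
  by_contra hcon
  push_neg at hcon
  obtain ⟨hbig, hnot_top⟩ := hcon
  set ω := G.cliqueNum with hωdef
  -- a nonadjacent pair of distinct vertices
  have hpair : ∃ x y, x ≠ y ∧ ¬ G.Adj x y := by
    by_contra hp
    push_neg at hp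
    apply hnot_top
    ext x y
    simp only [top_adj]
    exact ⟨fun h => G.ne_of_adj h, fun h => hp x y h⟩
  obtain ⟨x₀, y₀, hxy_ne, hxy_nadj⟩ := hpair
  -- neighbor finset cards
  have hkcard : ∀ v : V, (G.neighborFinset v).card = k := by
    intro v
    rw [SimpleGraph.neighborFinset_def, ← Set.ncard_eq_toFinset_card']
    exact hreg v
  -- closed neighborhoods have k+1 vertices
  have hNcard : ∀ v : V, (insert v (G.neighborSet v)).ncard = k + 1 := by
    intro v
    rw [Set.ncard_insert_of_notMem (by simp) (Set.toFinite _), hreg v]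
  -- a clique through p lies in the closed neighborhood of p
  have hcliqueN : ∀ (C : Set V) (p : V), G.IsClique C → p ∈ C →
      C ⊆ insert p (G.neighborSet p) := by
    intro C p hC hp x hx
    by_cases hxp : x = p
    · exact hxp ▸ Set.mem_insert _ _
    · exact Set.mem_insert_of_mem _ (hC hp hx (fun h => hxp h.symm))
  -- every clique extends to a maximal clique
  have hext : ∀ S : Set V, G.IsClique S → ∃ C : Set V, Maximal G.IsClique C ∧ S ⊆ C := by
    intro S hS
    obtain ⟨C, hCmem, hCmax⟩ := Set.Finite.exists_maximalFor (id : Set V → Set V)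
      {C : Set V | G.IsClique C ∧ S ⊆ C} (Set.toFinite _) ⟨S, hS, subset_rfl⟩
    refine ⟨C, ⟨hCmem.1, fun D hD hCD => ?_⟩, hCmem.2⟩
    exact hCmax ⟨hD, hCmem.2.trans hCD⟩ hCD
  -- all maximal cliques have ncard ω
  have hMC : ∀ C : Set V, Maximal G.IsClique C → C.ncard = ω := by
    obtain ⟨s, hs⟩ := G.exists_isNClique_cliqueNum
    obtain ⟨Cs, hCs, hsub⟩ := hext (s : Set V) hs.isClique
    have h1 : ω ≤ Cs.ncard := by
      have := Set.ncard_le_ncard hsub (Set.toFinite _)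
      rwa [Set.ncard_coe_finset, hs.card_eq] at this
    have h2 : Cs.ncard ≤ ω := by
      have hc : G.IsClique (Cs.toFinset : Set V) := by
        rw [Set.coe_toFinset]; exact hCs.1
      have := SimpleGraph.IsClique.card_le_cliqueNum (G := G) (t := Cs.toFinset) (tc := hc)
      rwa [← Set.ncard_eq_toFinset_card'] at this
    intro C hC
    rw [hcwc C Cs hC hCs]
    omega
  -- intersecting maximal cliques intersect in at least 2ω - (k+1) vertices
  have hinter : ∀ C D : Set V, Maximal G.IsClique C → Maximal G.IsClique D →
      (C ∩ D).Nonempty → 2 * ω ≤ (C ∩ D).ncard + (k + 1) := by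
    rintro C D hC hD ⟨p, hpC, hpD⟩
    have hsub : C ∪ D ⊆ insert p (G.neighborSet p) :=
      Set.union_subset (hcliqueN C p hC.1 hpC) (hcliqueN D p hD.1 hpD)
    have h1 : (C ∪ D).ncard ≤ k + 1 := by
      have := Set.ncard_le_ncard hsub (Set.toFinite _)
      rwa [hNcard p] at this
    have h2 := Set.ncard_inter_add_ncard_union C D (Set.toFinite _) (Set.toFinite _)
    rw [hMC C hC, hMC D hD] at h2
    omega
  -- via connectivity, ANY two maximal cliques intersect
  have key : ∀ (u w : V) (_ : G.Walk u w) (C D : Set V), Maximal G.IsClique C →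
      Maximal G.IsClique D → u ∈ C → w ∈ D → (C ∩ D).Nonempty := by
    intro u w p
    induction p with
    | nil => exact fun C D _ _ h1 h2 => ⟨_, h1, h2⟩
    | @cons a b c hab p ih =>
      intro C D hC hD haC hcD
      obtain ⟨F, hF, hsubF⟩ := hext {a, b} (SimpleGraph.isClique_pair.mpr (fun _ => hab))
      have haF : a ∈ F := hsubF (by simp)
      have hbF : b ∈ F := hsubF (by simp)
      have h1 := hinter F C hF hC ⟨a, haF, haC⟩
      have h2 := hinter F D hF hD (ih F D hF hD hbF hcD)
      have e0 := Set.ncard_inter_add_ncard_union (F ∩ C) (F ∩ D) (Set.toFinite _)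
        (Set.toFinite _)
      have e1 : ((F ∩ C) ∪ (F ∩ D)).ncard ≤ ω := by
        have hsub2 : (F ∩ C) ∪ (F ∩ D) ⊆ F :=
          Set.union_subset Set.inter_subset_left Set.inter_subset_left
        have := Set.ncard_le_ncard hsub2 (Set.toFinite _)
        rwa [hMC F hF] at this
      have e2 : 0 < ((F ∩ C) ∩ (F ∩ D)).ncard := by omega
      obtain ⟨q, hq⟩ := (Set.ncard_pos (Set.toFinite _)).mp e2
      exact ⟨q, hq.1.2, hq.2.2⟩
  have hpw : ∀ C D : Set V, Maximal G.IsClique C → Maximal G.IsClique D →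
      (C ∩ D).Nonempty := by
    intro C D hC hD
    have hCne : C.Nonempty := by
      rw [← Set.ncard_pos (Set.toFinite _), hMC C hC]; omega
    have hDne : D.Nonempty := by
      rw [← Set.ncard_pos (Set.toFinite _), hMC D hD]; omega
    obtain ⟨u, hu⟩ := hCne
    obtain ⟨w, hw⟩ := hDne
    obtain ⟨p⟩ := hconn.preconnected u w
    exact key u w p C D hC hD hu hw
  -- fix a maximal clique C₀ and set up the counting
  obtain ⟨C₀, hC₀, hx₀C₀⟩ := hext {x₀} (SimpleGraph.isClique_singleton (G := G) x₀)
  set A : Finset V := C₀.toFinset with hAdef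
  have hA : A.card = ω := by
    rw [hAdef, ← Set.ncard_eq_toFinset_card']; exact hMC C₀ hC₀
  set B : Finset V := Aᶜ with hBdef
  have hn : B.card + ω = Fintype.card V := by
    rw [hBdef, ← hA]; exact Finset.card_compl_add_card A
  have hωk : ω ≤ k + 1 := by
    have hx₀ : x₀ ∈ C₀ := hx₀C₀ rfl
    have := Set.ncard_le_ncard (hcliqueN C₀ x₀ hC₀.1 hx₀) (Set.toFinite _)
    rwa [hMC C₀ hC₀, hNcard x₀] at this
  have hn2 : k + 2 ≤ Fintype.card V := by
    have h1 : (insert y₀ (insert x₀ (G.neighborFinset x₀))).card ≤ Fintype.card V :=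
      Finset.card_le_univ _
    have hx : x₀ ∉ G.neighborFinset x₀ := by simp
    have hy : y₀ ∉ insert x₀ (G.neighborFinset x₀) := by
      simp only [Finset.mem_insert, SimpleGraph.mem_neighborFinset]
      push_neg
      exact ⟨fun h => hxy_ne h.symm, hxy_nadj⟩
    rw [Finset.card_insert_of_notMem hy, Finset.card_insert_of_notMem hx, hkcard x₀] at h1
    omega
  -- each vertex of A has exactly (k+1) - ω neighbors outside A
  have hxv : ∀ v ∈ A, (B.filter (fun w => G.Adj v w)).card + ω = k + 1 := by
    intro v hv
    have hvC : v ∈ C₀ := by rwa [hAdef, Set.mem_toFinset] at hv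
    have h1 : G.neighborFinset v ∩ A = A.erase v := by
      ext a
      simp only [Finset.mem_inter, SimpleGraph.mem_neighborFinset, Finset.mem_erase, hAdef,
        Set.mem_toFinset]
      constructor
      · rintro ⟨hadj, haC⟩; exact ⟨fun h => G.irrefl (h ▸ hadj), haC⟩
      · rintro ⟨hne, haC⟩; exact ⟨hC₀.1 hvC haC (fun h => hne h.symm), haC⟩
    have h2 : B.filter (fun w => G.Adj v w) = G.neighborFinset v \ A := by
      ext w
      simp only [Finset.mem_filter, hBdef, Finset.mem_compl, Finset.mem_sdiff,
        SimpleGraph.mem_neighborFinset]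
      tauto
    have h3 := Finset.card_inter_add_card_sdiff (G.neighborFinset v) A
    rw [h1, hkcard v] at h3
    have h4 : (A.erase v).card + 1 = A.card := Finset.card_erase_add_one hv
    rw [h2]
    omega
  -- each vertex outside A has at least 2ω - (k+1) neighbors in A
  have hzw : ∀ w ∈ B, 2 * ω ≤ (A.filter (fun v => G.Adj v w)).card + (k + 1) := by
    intro w hw
    have hwA : w ∉ A := by
      rw [hBdef] at hw; exact Finset.mem_compl.mp hw
    have hwC₀ : w ∉ C₀ := fun h => hwA (by rw [hAdef]; exact Set.mem_toFinset.mpr h)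
    obtain ⟨F, hF, hwF'⟩ := hext {w} (SimpleGraph.isClique_singleton (G := G) w)
    have hwF : w ∈ F := hwF' rfl
    have h2 := hinter F C₀ hF hC₀ (hpw F C₀ hF hC₀)
    have hsub : (F ∩ C₀).toFinset ⊆ A.filter (fun v => G.Adj v w) := by
      intro v hv
      rw [Set.mem_toFinset] at hv
      refine Finset.mem_filter.mpr ⟨by rw [hAdef]; exact Set.mem_toFinset.mpr hv.2, ?_⟩
      exact hF.1 hv.1 hwF (fun h => hwC₀ (h ▸ hv.2))
    have h3 := Finset.card_le_card hsub
    rw [← Set.ncard_eq_toFinset_card'] at h3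
    omega
  -- Fubini for the edge and non-edge counts between A and B
  have hswap1 : ∑ v ∈ A, (B.filter (fun w => G.Adj v w)).card
      = ∑ w ∈ B, (A.filter (fun v => G.Adj v w)).card := by
    simp only [Finset.card_filter]
    exact Finset.sum_comm
  have hswap2 : ∑ v ∈ A, (B.filter (fun w => ¬ G.Adj v w)).card
      = ∑ w ∈ B, (A.filter (fun v => ¬ G.Adj v w)).card := by
    simp only [Finset.card_filter]
    exact Finset.sum_comm
  -- the edge count
  set m := ∑ w ∈ B, (A.filter (fun v => G.Adj v w)).card with hmdef
  have hm1 : m + ω * ω = ω * (k + 1) := by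
    have h : ∑ v ∈ A, ((B.filter (fun w => G.Adj v w)).card + ω) = ∑ _v ∈ A, (k + 1) :=
      Finset.sum_congr rfl (fun v hv => by rw [hxv v hv])
    rw [Finset.sum_add_distrib, Finset.sum_const, Finset.sum_const, hswap1, hA,
      smul_eq_mul, smul_eq_mul] at h
    exact h
  have hm2 : B.card * (2 * ω) ≤ m + B.card * (k + 1) := by
    have h : ∑ _w ∈ B, (2 * ω) ≤ ∑ w ∈ B, ((A.filter (fun v => G.Adj v w)).card + (k + 1)) :=
      Finset.sum_le_sum (fun w hw => hzw w hw)
    rw [Finset.sum_add_distrib, Finset.sum_const, Finset.sum_const, smul_eq_mul,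
      smul_eq_mul] at h
    exact h
  -- the non-edge count
  have hyv : ∀ v ∈ A, (B.filter (fun w => ¬ G.Adj v w)).card + (k + 1) = B.card + ω := by
    intro v hv
    have h0 := Finset.card_filter_add_card_filter_not (s := B)
      (p := fun w => G.Adj v w)
    have h1 := hxv v hv
    omega
  have hzw2 : ∀ w ∈ B, (A.filter (fun v => ¬ G.Adj v w)).card + (k + 1) ≤ Fintype.card V := by
    intro w hw
    have hwA : w ∉ A := by
      rw [hBdef] at hw; exact Finset.mem_compl.mp hw
    have hdisj : Disjoint (A.filter (fun v => ¬ G.Adj v w)) (insert w (G.neighborFinset w)) := by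
      rw [Finset.disjoint_insert_right]
      constructor
      · intro hmem; exact hwA (Finset.mem_filter.mp hmem).1
      · rw [Finset.disjoint_right]
        intro a ha hmem
        rw [SimpleGraph.mem_neighborFinset] at ha
        exact (Finset.mem_filter.mp hmem).2 ha.symm
    have hcard : (insert w (G.neighborFinset w)).card = k + 1 := by
      rw [Finset.card_insert_of_notMem (G.notMem_neighborFinset_self w), hkcard w]
    calc (A.filter (fun v => ¬ G.Adj v w)).card + (k + 1)
        = ((A.filter (fun v => ¬ G.Adj v w)) ∪ insert w (G.neighborFinset w)).card := by
          rw [Finset.card_union_of_disjoint hdisj, hcard]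
      _ ≤ Fintype.card V := Finset.card_le_univ _
  set M := ∑ w ∈ B, (A.filter (fun v => ¬ G.Adj v w)).card with hMdef
  have hM1 : M + ω * (k + 1) = ω * (B.card + ω) := by
    have h : ∑ v ∈ A, ((B.filter (fun w => ¬ G.Adj v w)).card + (k + 1))
        = ∑ _v ∈ A, (B.card + ω) :=
      Finset.sum_congr rfl (fun v hv => by rw [hyv v hv])
    rw [Finset.sum_add_distrib, Finset.sum_const, Finset.sum_const, hswap2, hA,
      smul_eq_mul, smul_eq_mul] at h
    exact h
  have hM2 : M + B.card * (k + 1) ≤ B.card * Fintype.card V := by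
    have h : ∑ w ∈ B, ((A.filter (fun v => ¬ G.Adj v w)).card + (k + 1))
        ≤ ∑ _w ∈ B, Fintype.card V :=
      Finset.sum_le_sum (fun w hw => hzw2 w hw)
    rw [Finset.sum_add_distrib, Finset.sum_const, Finset.sum_const, smul_eq_mul,
      smul_eq_mul] at h
    exact h
  -- define ν = n - (k+1) ≥ 1 and conclude ω ≤ B.card
  obtain ⟨ν, hν⟩ : ∃ ν, Fintype.card V = ν + (k + 1) := ⟨Fintype.card V - (k + 1), by omega⟩
  have hν1 : 1 ≤ ν := by omega
  have hωB : ω ≤ B.card := by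
    have e1 : M = ω * ν := by
      have h0 : ω * (B.card + ω) = ω * ν + ω * (k + 1) := by
        rw [← Nat.mul_add, hn, ← hν]
      have h' : M + ω * (k + 1) = ω * ν + ω * (k + 1) := by rw [hM1, h0]
      exact Nat.add_right_cancel h'
    have e2 : M ≤ B.card * ν := by
      have h0 : B.card * Fintype.card V = B.card * ν + B.card * (k + 1) := by
        rw [← Nat.mul_add, ← hν]
      have h' : M + B.card * (k + 1) ≤ B.card * ν + B.card * (k + 1) := by
        rw [← h0]; exact hM2
      exact Nat.le_of_add_le_add_right h'
    have h3 : ω * ν ≤ B.card * ν := e1 ▸ e2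
    exact Nat.le_of_mul_le_mul_right h3 (by omega)
  -- conclude: t ≤ s where t = 2ω - (k+1), s = (k+1) - ω, contradicting 3ω > 2(k+1)
  obtain ⟨t, ht⟩ : ∃ t, 2 * ω = t + (k + 1) := ⟨2 * ω - (k + 1), by omega⟩
  obtain ⟨s, hs⟩ : ∃ s, k + 1 = s + ω := ⟨k + 1 - ω, by omega⟩
  have hms : m = ω * s := by
    have h' : m + ω * ω = ω * s + ω * ω := by
      rw [hm1, hs, Nat.mul_add]
    exact Nat.add_right_cancel h'
  have hbt : B.card * t ≤ m := by
    have h1 : B.card * t + B.card * (k + 1) ≤ m + B.card * (k + 1) := by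
      rw [← Nat.mul_add, ← ht]; exact hm2
    exact Nat.le_of_add_le_add_right h1
  have hfin : ω * t ≤ ω * s := by
    calc ω * t ≤ B.card * t := Nat.mul_le_mul_right t hωB
      _ ≤ m := hbt
      _ = ω * s := hms
  have hts : t ≤ s := Nat.le_of_mul_le_mul_left hfin (by omega)
  omega
end

section
/- In a connected irreducible well-covered CIS graph with clique number exactly 3, every edge is contained in exactly one triangle. -/
open SimpleGraph

variable {V : Type*}

/-- A graph is irreducible if no two distinct vertices have the same open neighborhood. -/
def SimpleGraph.Irreducible (G : SimpleGraph V) : Prop :=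
  ∀ u v : V, G.neighborSet u = G.neighborSet v → u = v

section Aux

variable (G : SimpleGraph V) [Fintype V]

/-- No 4-clique in a graph with clique number 3. -/
lemma aux_no_K4 (hω : G.cliqueNum = 3) {a b c d : V}
    (hab : G.Adj a b) (hac : G.Adj a c) (had : G.Adj a d) (hbc : G.Adj b c)
    (hbd : G.Adj b d) (hcd : G.Adj c d) : False := by
  classical
  have hclique : G.IsClique ({a, b, c, d} : Finset V) := by
    intro x hx y hy hne
    simp only [Finset.coe_insert, Set.mem_insert_iff, Finset.coe_singleton,
      Set.mem_singleton_iff] at hx hy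
    rcases hx with rfl | rfl | rfl | rfl <;> rcases hy with rfl | rfl | rfl | rfl <;>
      first
        | exact (hne rfl).elim
        | exact hab | exact hab.symm | exact hac | exact hac.symm
        | exact had | exact had.symm | exact hbc | exact hbc.symm
        | exact hbd | exact hbd.symm | exact hcd | exact hcd.symm
  have hcard : ({a, b, c, d} : Finset V).card = 4 := by
    rw [Finset.card_insert_of_notMem (by simp [hab.ne, hac.ne, had.ne]),
      Finset.card_insert_of_notMem (by simp [hbc.ne, hbd.ne]),
      Finset.card_insert_of_notMem (by simp [hcd.ne]), Finset.card_singleton]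
  have h4 : ({a, b, c, d} : Finset V).card ≤ G.cliqueNum :=
    @SimpleGraph.IsClique.card_le_cliqueNum _ G _ _ hclique
  rw [hcard, hω] at h4
  omega

/-- CIS: no maximal clique can be dominated by a disjoint stable set. -/
lemma aux_cis_dom (hcis : G.IsCIS) {C I : Set V}
    (hC : Maximal G.IsClique C) (hI : G.IsStableSet I) (hdisj : ∀ x ∈ I, x ∉ C)
    (hdom : ∀ c ∈ C, ∃ i ∈ I, G.Adj c i) : False := by
  obtain ⟨S, hIS, hS⟩ := Finite.exists_le_maximal hI
  obtain ⟨z, hzC, hzS⟩ := hcis C S hC hS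
  obtain ⟨i, hiI, hadj⟩ := hdom z hzC
  have hne : z ≠ i := fun h => hdisj i hiI (h ▸ hzC)
  exact hS.1 hzS (hIS hiI) hne hadj

/-- If an edge `xy` is in no triangle, then every neighbor of `x` (other than `y`)
is adjacent to every neighbor of `y` (other than `x`). -/
lemma aux_join (hcis : G.IsCIS) {x y : V} (hxy : G.Adj x y)
    (hnt : ∀ w, G.Adj x w → G.Adj y w → False)
    {p q : V} (hp : G.Adj x p) (hpy : p ≠ y) (hq : G.Adj y q) (hqx : q ≠ x) :
    G.Adj p q := by
  by_contra hpq
  have hpq' : p ≠ q := by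
    rintro rfl
    exact hnt p hp hq
  have hCmax : Maximal G.IsClique ({x, y} : Set V) := by
    constructor
    · intro a ha b hb hab
      rcases ha with rfl | ha
      · rcases hb with rfl | hb
        · exact (hab rfl).elim
        · rw [Set.mem_singleton_iff] at hb; subst hb; exact hxy
      · rw [Set.mem_singleton_iff] at ha; subst ha
        rcases hb with rfl | hb
        · exact hxy.symm
        · rw [Set.mem_singleton_iff] at hb; subst hb; exact (hab rfl).elim
    · intro D hD hsub z hz
      by_contra hz'
      simp only [Set.mem_insert_iff, Set.mem_singleton_iff, not_or] at hz'
      have hxD : x ∈ D := hsub (by simp)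
      have hyD : y ∈ D := hsub (by simp)
      exact hnt z (hD hxD hz fun h => hz'.1 h.symm)
        (hD hyD hz fun h => hz'.2 h.symm)
  apply aux_cis_dom G hcis hCmax (I := {p, q})
  · intro a ha b hb hab
    rcases ha with rfl | ha
    · rcases hb with rfl | hb
      · exact (hab rfl).elim
      · rw [Set.mem_singleton_iff] at hb; subst hb; exact hpq
    · rw [Set.mem_singleton_iff] at ha; subst ha
      rcases hb with rfl | hb
      · exact fun h => hpq h.symm
      · rw [Set.mem_singleton_iff] at hb; subst hb; exact (hab rfl).elim
  · intro a ha
    rcases ha with rfl | ha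
    · intro h
      rcases h with rfl | h
      · exact G.irrefl hp
      · rw [Set.mem_singleton_iff] at h; exact hpy h
    · rw [Set.mem_singleton_iff] at ha; subst ha
      intro h
      rcases h with rfl | h
      · exact hqx rfl
      · rw [Set.mem_singleton_iff] at h; subst h; exact G.irrefl hq
  · intro c hc
    rcases hc with rfl | hc
    · exact ⟨p, by simp, hp⟩
    · rw [Set.mem_singleton_iff] at hc; subst hc
      exact ⟨q, by simp, hq⟩

/-- Uniqueness of the common neighbor of an edge. -/
lemma aux_unique (hirr : G.Irreducible) (hcis : G.IsCIS) (hω : G.cliqueNum = 3)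
    {x y : V} (hxy : G.Adj x y) {w w' : V}
    (hw1 : G.Adj x w) (hw2 : G.Adj y w) (hw1' : G.Adj x w') (hw2' : G.Adj y w') :
    w = w' := by
  by_contra hne
  have hww' : ¬ G.Adj w w' := by
    intro h
    exact aux_no_K4 G hω hxy hw1 hw1' hw2 hw2' h
  have key : ∀ a b : V, G.Adj x a → G.Adj y a → G.Adj x b → G.Adj y b →
      a ≠ b → ¬ G.Adj a b → G.neighborSet a ⊆ G.neighborSet b := by
    intro a b ha1 ha2 hb1 hb2 hab hnadj t ht
    rw [mem_neighborSet] at ht ⊢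
    by_cases htx : t = x
    · subst htx; exact hb1.symm
    by_cases hty : t = y
    · subst hty; exact hb2.symm
    by_contra hbt
    -- C = {x, y, a} is a maximal clique, I = {b, t} stable, dominating, disjoint
    have hCmax : Maximal G.IsClique ({x, y, a} : Set V) := by
      constructor
      · intro c hc d hd hcd
        simp only [Set.mem_insert_iff, Set.mem_singleton_iff] at hc hd
        rcases hc with rfl | rfl | rfl <;> rcases hd with rfl | rfl | rfl <;>
          first
            | exact (hcd rfl).elim
            | exact hxy | exact hxy.symm | exact ha1 | exact ha1.symm
            | exact ha2 | exact ha2.symm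
      · intro D hD hsub z hz
        by_contra hz'
        simp only [Set.mem_insert_iff, Set.mem_singleton_iff, not_or] at hz'
        obtain ⟨hz1, hz2, hz3⟩ := hz'
        have hxD : x ∈ D := hsub (by simp)
        have hyD : y ∈ D := hsub (by simp)
        have haD : a ∈ D := hsub (by simp)
        exact aux_no_K4 G hω hxy ha1 (hD hxD hz fun h => hz1 h.symm) ha2
          (hD hyD hz fun h => hz2 h.symm) (hD haD hz fun h => hz3 h.symm)
    apply aux_cis_dom G hcis hCmax (I := {b, t})
    · intro c hc d hd hcd
      rcases hc with rfl | hc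
      · rcases hd with rfl | hd
        · exact (hcd rfl).elim
        · rw [Set.mem_singleton_iff] at hd; subst hd
          exact hbt
      · rw [Set.mem_singleton_iff] at hc; subst hc
        rcases hd with rfl | hd
        · exact fun h => hbt h.symm
        · rw [Set.mem_singleton_iff] at hd; subst hd; exact (hcd rfl).elim
    · intro c hc
      rcases hc with rfl | hc
      · intro h
        simp only [Set.mem_insert_iff, Set.mem_singleton_iff] at h
        rcases h with rfl | rfl | rfl
        · exact G.irrefl hb1
        · exact G.irrefl hb2
        · exact hab rfl
      · rw [Set.mem_singleton_iff] at hc; subst hc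
        intro h
        simp only [Set.mem_insert_iff, Set.mem_singleton_iff] at h
        rcases h with rfl | rfl | rfl
        · exact htx rfl
        · exact hty rfl
        · exact G.irrefl ht
    · intro c hc
      simp only [Set.mem_insert_iff, Set.mem_singleton_iff] at hc
      rcases hc with rfl | rfl | rfl
      · exact ⟨b, by simp, hb1⟩
      · exact ⟨b, by simp, hb2⟩
      · exact ⟨t, by simp, ht⟩
  have h1 : G.neighborSet w ⊆ G.neighborSet w' :=
    key w w' hw1 hw2 hw1' hw2' hne hww'
  have h2 : G.neighborSet w' ⊆ G.neighborSet w :=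
    key w' w hw1' hw2' hw1 hw2 (Ne.symm hne) (fun h => hww' h.symm)
  exact hne (hirr w w' (le_antisymm h1 h2))

/-- The pendant case: in a well-covered CIS graph there is no pendant vertex
attached to a vertex of degree at least 2. -/
lemma aux_pendant (hwc : ∀ S T : Set V, Maximal G.IsStableSet S → Maximal G.IsStableSet T →
      S.ncard = T.ncard) (hcis : G.IsCIS) {u v b : V} (huv : G.Adj u v)
    (hNu : ∀ w, G.Adj u w → w = v) (hb : G.Adj v b) (hbu : b ≠ u) : False := by
  classical
  have hbv : b ≠ v := hb.ne'
  -- maximal stable set containing v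
  have hvstable : G.IsStableSet ({v} : Set V) := Set.pairwise_singleton _ _
  obtain ⟨S₀, hvS₀', hS₀⟩ := Finite.exists_le_maximal hvstable
  have hvS₀ : v ∈ S₀ := hvS₀' rfl
  have huS₀ : u ∉ S₀ := fun h => hS₀.1 h hvS₀ huv.ne huv
  -- swap v for u
  set S' : Set V := insert u (S₀ \ {v}) with hS'def
  have hS'stable : G.IsStableSet S' := by
    intro a ha c hc hac
    rcases ha with rfl | ha
    · rcases hc with rfl | hc
      · exact (hac rfl).elim
      · intro h
        exact hc.2 (hNu c h)
    · rcases hc with rfl | hc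
      · intro h
        exact ha.2 (hNu a h.symm)
      · exact hS₀.1 ha.1 hc.1 hac
  have huS' : u ∈ S' := by simp [hS'def]
  -- S' has the same cardinality as S₀
  have hu' : u ∉ S₀ \ {v} := fun h => huS₀ h.1
  have hcard : S'.ncard = S₀.ncard := by
    rw [hS'def, Set.ncard_insert_of_notMem hu' (Set.toFinite _),
      Set.ncard_diff_singleton_add_one hvS₀ (Set.toFinite _)]
  -- S' is maximal by well-coveredness
  obtain ⟨T, hS'T, hT⟩ := Finite.exists_le_maximal hS'stable
  have hTcard : T.ncard = S₀.ncard := hwc T S₀ hT hS₀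
  have hS'eq : S' = T :=
    Set.eq_of_subset_of_ncard_le hS'T (by rw [hTcard, hcard]) (Set.toFinite _)
  have hS'max : Maximal G.IsStableSet S' := hS'eq ▸ hT
  -- maximal clique containing {v, b}
  have hvbclique : G.IsClique ({v, b} : Set V) := by
    intro a ha c hc hac
    rcases ha with rfl | ha
    · rcases hc with rfl | hc
      · exact (hac rfl).elim
      · rw [Set.mem_singleton_iff] at hc; subst hc; exact hb
    · rw [Set.mem_singleton_iff] at ha; subst ha
      rcases hc with rfl | hc
      · exact hb.symm
      · rw [Set.mem_singleton_iff] at hc; subst hc; exact (hac rfl).elim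
  obtain ⟨C₁, hsubC₁, hC₁⟩ := Finite.exists_le_maximal hvbclique
  have hvC₁ : v ∈ C₁ := hsubC₁ (by simp)
  have hbC₁ : b ∈ C₁ := hsubC₁ (by simp)
  -- CIS: C₁ ∩ S' nonempty, contradiction
  obtain ⟨z, hzC, hzS⟩ := hcis C₁ S' hC₁ hS'max
  rcases hzS with rfl | hzS
  · -- z = u ∈ C₁, so u adjacent to b, so b = v, contradiction
    have : G.Adj z b := hC₁.1 hzC hbC₁ (Ne.symm hbu)
    exact hbv (hNu b this)
  · -- z ∈ S₀ \ {v} and z ∈ C₁, so z adjacent to v, contradicting stability of S₀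
    have hzv : z ≠ v := hzS.2
    have : G.Adj z v := hC₁.1 hzC hvC₁ hzv
    exact hS₀.1 hzS.1 hvS₀ hzv this

end Aux

theorem edge_in_unique_triangle (G : SimpleGraph V) [Fintype V]
    (hconn : G.Connected) (hirr : G.Irreducible)
    (hwc : ∀ S T : Set V, Maximal G.IsStableSet S → Maximal G.IsStableSet T →
      S.ncard = T.ncard)
    (hcis : G.IsCIS) (hω : G.cliqueNum = 3)
    (u v : V) (huv : G.Adj u v) :
    ∃! w : V, G.Adj u w ∧ G.Adj v w := by
  classical
  by_cases hex : ∃ w, G.Adj u w ∧ G.Adj v w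
  · obtain ⟨w, hw⟩ := hex
    exact ⟨w, hw, fun w' hw' => aux_unique G hirr hcis hω huv hw'.1 hw'.2 hw.1 hw.2⟩
  exfalso
  have hnt : ∀ w, G.Adj u w → G.Adj v w → False := fun w h1 h2 => hex ⟨w, h1, h2⟩
  have hjoin : ∀ a b, G.Adj u a → a ≠ v → G.Adj v b → b ≠ u → G.Adj a b :=
    fun a b ha hav hb hbu => aux_join G hcis huv hnt ha hav hb hbu
  by_cases hA : ∃ a, G.Adj u a ∧ a ≠ v
  · by_cases hB : ∃ b, G.Adj v b ∧ b ≠ u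
    · -- both nonempty
      obtain ⟨a₀, ha₀, ha₀v⟩ := hA
      obtain ⟨b₀, hb₀, hb₀u⟩ := hB
      by_cases hBedge : ∃ b b', G.Adj v b ∧ b ≠ u ∧ G.Adj v b' ∧ b' ≠ u ∧ G.Adj b b'
      · -- B has an edge b b'; then A = {a₀}
        obtain ⟨b, b', hb, hbu', hb', hb'u, hbb'⟩ := hBedge
        have hAsing : ∀ a, G.Adj u a → a ≠ v → a = a₀ := by
          intro a ha hav
          exact aux_unique G hirr hcis hω hbb' (hjoin a b ha hav hb hbu').symm
            (hjoin a b' ha hav hb' hb'u).symm (hjoin a₀ b ha₀ ha₀v hb hbu').symm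
            (hjoin a₀ b' ha₀ ha₀v hb' hb'u).symm
        -- edge u a₀ has no common neighbor
        have hnt' : ∀ w, G.Adj u w → G.Adj a₀ w → False := by
          intro w hw1 hw2
          by_cases hwv : w = v
          · subst hwv; exact hnt a₀ ha₀ hw2.symm
          · exact G.irrefl (hAsing w hw1 hwv ▸ hw2)
        -- N(a₀) = N(v), contradiction
        have : G.neighborSet a₀ = G.neighborSet v := by
          ext t
          simp only [mem_neighborSet]
          constructor
          · intro ht
            by_cases htu : t = u
            · subst htu; exact huv.symm
            · exact aux_join G hcis ha₀ hnt' huv ha₀v.symm ht htu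
          · intro ht
            by_cases htu : t = u
            · subst htu; exact ha₀.symm
            · exact (hjoin a₀ t ha₀ ha₀v ht htu)
        exact ha₀v (hirr a₀ v this)
      · -- B is stable; edge v b₀ has no common neighbor
        have hBstab : ∀ b b', G.Adj v b → b ≠ u → G.Adj v b' → b' ≠ u → ¬ G.Adj b b' :=
          fun b b' h1 h2 h3 h4 h5 => hBedge ⟨b, b', h1, h2, h3, h4, h5⟩
        have hnt' : ∀ w, G.Adj v w → G.Adj b₀ w → False := by
          intro w hw1 hw2
          by_cases hwu : w = u
          · subst hwu; exact hnt b₀ hw2.symm hb₀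
          · exact hBstab b₀ w hb₀ hb₀u hw1 hwu hw2
        -- N(b₀) = N(u), contradiction
        have : G.neighborSet b₀ = G.neighborSet u := by
          ext t
          simp only [mem_neighborSet]
          constructor
          · intro ht
            by_cases htv : t = v
            · subst htv; exact huv
            · exact aux_join G hcis hb₀ hnt' huv.symm hb₀u.symm ht htv
          · intro ht
            by_cases htv : t = v
            · subst htv; exact hb₀.symm
            · exact (hjoin t b₀ ht htv hb₀ hb₀u).symm
        exact hb₀u (hirr b₀ u this)
    · -- B empty: v is pendant at u
      have hNv : ∀ w, G.Adj v w → w = u := by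
        intro w hw
        by_contra h
        exact hB ⟨w, hw, h⟩
      obtain ⟨a₀, ha₀, ha₀v⟩ := hA
      exact aux_pendant G hwc hcis huv.symm hNv ha₀ ha₀v
  · by_cases hB : ∃ b, G.Adj v b ∧ b ≠ u
    · -- A empty: u is pendant at v
      have hNu : ∀ w, G.Adj u w → w = v := by
        intro w hw
        by_contra h
        exact hA ⟨w, hw, h⟩
      obtain ⟨b₀, hb₀, hb₀u⟩ := hB
      exact aux_pendant G hwc hcis huv hNu hb₀ hb₀u
    · -- both empty: component is {u, v}, contradicting cliqueNum = 3
      have hNu : ∀ w, G.Adj u w → w = v := fun w hw => by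
        by_contra h; exact hA ⟨w, hw, h⟩
      have hNv : ∀ w, G.Adj v w → w = u := fun w hw => by
        by_contra h; exact hB ⟨w, hw, h⟩
      have hkey : ∀ z t : V, G.Walk z t → (z = u ∨ z = v) → t = u ∨ t = v := by
        intro z t p
        induction p with
        | nil => exact id
        | @cons z₁ z₂ t h p ih =>
          intro hz
          apply ih
          rcases hz with rfl | rfl
          · exact Or.inr (hNu z₂ h)
          · exact Or.inl (hNv z₂ h)
      have hall : ∀ t : V, t = u ∨ t = v := by
        intro t
        obtain ⟨p⟩ := hconn.preconnected u t
        exact hkey u t p (Or.inl rfl)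
      obtain ⟨s, hs⟩ := G.exists_isNClique_cliqueNum
      rw [hω] at hs
      have hsub : s ⊆ ({u, v} : Finset V) := by
        intro x hx
        rcases hall x with rfl | rfl <;> simp
      have := Finset.card_le_card hsub
      have h2 : ({u, v} : Finset V).card ≤ 2 := by
        apply le_trans (Finset.card_insert_le _ _)
        simp
      rw [hs.card_eq] at this
      omega
end
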